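/- arXiv:1807.02479 — 6 statements merged into one kernel-verified Lean document; each statement's English description precedes it below -/
import Mathlib

section
/- For every (x,y,θ) ∈ ℝ²×ℝ, the L² inner product of the Gabor filter ψ_{x,y,θ} with the mother filter ψ₀ = ψ_{0,0,0} equals ⟨ψ_{x,y,θ}, ψ_{0,0,0}⟩_{L²} = σ²π · exp( −x²/(4σ²) − y²/(4σ²) − 2σ²π²(1 − cos θ)/λ² ) · exp( −iπ·( x(1 + cos θ) + y sin θ )/λ ). -/
open MeasureTheory

/-- Rotation of the plane by angle `θ`. -/
noncomputable def rot (θ : ℝ) (w : ℝ × ℝ) : ℝ × ℝ :=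
  (w.1 * Real.cos θ - w.2 * Real.sin θ, w.1 * Real.sin θ + w.2 * Real.cos θ)

/-- The mother Gabor filter `ψ₀(u,v) = exp(2πiu/λ)·exp(−(u²+v²)/(2σ²))`. -/
noncomputable def gaborMother (lam sg : ℝ) (w : ℝ × ℝ) : ℂ :=
  Complex.exp (2 * (Real.pi : ℂ) * Complex.I * (w.1 : ℂ) / (lam : ℂ)) *
    Complex.exp (-(((w.1 ^ 2 + w.2 ^ 2) / (2 * sg ^ 2) : ℝ) : ℂ))

/-- The Gabor filter `ψ_{x,y,θ}(u,v) = ψ₀(R_{−θ}((u,v)−(x,y)))` for `p = (x,y,θ)`. -/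
noncomputable def gabor (lam sg : ℝ) (p : ℝ × ℝ × ℝ) (w : ℝ × ℝ) : ℂ :=
  gaborMother lam sg (rot (-p.2.2) (w - (p.1, p.2.1)))


open Complex Real

/-- The `L²` inner product `⟨ψ_{x,y,θ}, ψ_{0,0,0}⟩` (conjugate-linear in the second
argument) equals
`σ²π · exp(−x²/(4σ²) − y²/(4σ²) − 2σ²π²(1−cos θ)/λ²) · exp(−iπ(x(1+cos θ)+y sin θ)/λ)`. -/
theorem statement1 (lam sg : ℝ) (hlam : 0 < lam) (hsg : 0 < sg) (x y θ : ℝ) :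
    ∫ w : ℝ × ℝ, gabor lam sg (x, y, θ) w * (starRingEnd ℂ) (gabor lam sg (0, 0, 0) w) =
      ((sg ^ 2 * Real.pi : ℝ) : ℂ) *
        Complex.exp (((-(x ^ 2 / (4 * sg ^ 2)) - y ^ 2 / (4 * sg ^ 2) -
            2 * sg ^ 2 * Real.pi ^ 2 * (1 - Real.cos θ) / lam ^ 2 : ℝ) : ℂ)) *
        Complex.exp (-Complex.I *
          ((Real.pi * (x * (1 + Real.cos θ) + y * Real.sin θ) / lam : ℝ) : ℂ)) := by
  have hl : (lam:ℂ) ≠ 0 := by exact_mod_cast hlam.ne'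
  have hs : (sg:ℂ) ≠ 0 := by exact_mod_cast hsg.ne'
  set b : ℂ := -(1/(sg:ℂ)^2) with hbdef
  have hb : b.re < 0 := by
    have h : b = ((-(1/sg^2) : ℝ) : ℂ) := by rw [hbdef]; push_cast; ring
    rw [h, Complex.ofReal_re, neg_lt_zero]
    positivity
  set c1 : ℂ := ((x:ℂ)/sg^2) + 2*(π:ℂ)*I*((Real.cos θ : ℂ) - 1)/lam with hc1
  set d1 : ℂ := (-((x:ℂ)^2/(2*sg^2))) - 2*(π:ℂ)*I*(x*(Real.cos θ : ℂ))/lam with hd1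
  set c2 : ℂ := ((y:ℂ)/sg^2) + 2*(π:ℂ)*I*(Real.sin θ : ℂ)/lam with hc2
  set d2 : ℂ := (-((y:ℂ)^2/(2*sg^2))) - 2*(π:ℂ)*I*(y*(Real.sin θ : ℂ))/lam with hd2
  have key : ∀ w : ℝ × ℝ,
      gabor lam sg (x, y, θ) w * (starRingEnd ℂ) (gabor lam sg (0, 0, 0) w) =
      Complex.exp (b * w.1^2 + c1 * w.1 + d1) * Complex.exp (b * w.2^2 + c2 * w.2 + d2) := by
    intro w
    simp only [gabor, gaborMother, rot, Prod.fst_sub, Prod.snd_sub, Real.cos_neg, Real.sin_neg,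
      neg_zero, Real.cos_zero, Real.sin_zero, map_mul, ← Complex.exp_conj, hbdef, hc1, hd1, hc2, hd2]
    rw [← Complex.exp_add, ← Complex.exp_add, ← Complex.exp_add, ← Complex.exp_add]
    congr 1
    simp only [map_div₀, map_mul, map_add, map_neg, map_sub, map_ofNat, Complex.conj_ofReal,
      Complex.conj_I, map_pow]
    have hcs : ((Real.cos θ : ℂ))^2 + ((Real.sin θ : ℂ))^2 = 1 := by
      push_cast
      exact Complex.cos_sq_add_sin_sq _
    push_cast at hcs ⊢
    linear_combination (-((((w.1:ℂ) - x)^2 + ((w.2:ℂ) - y)^2)/(2*(sg:ℂ)^2))) * hcs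
  simp_rw [key]
  rw [Measure.volume_eq_prod,
    integral_prod_mul (fun u : ℝ => Complex.exp (b * (u:ℂ)^2 + c1 * u + d1))
      (fun v : ℝ => Complex.exp (b * (v:ℂ)^2 + c2 * v + d2)),
    integral_cexp_quadratic hb c1 d1, integral_cexp_quadratic hb c2 d2]
  have hnb : (↑π / -b : ℂ) = ((sg^2 * π : ℝ) : ℂ) := by
    rw [hbdef]
    push_cast
    field_simp
  have hpos : (0:ℝ) < sg^2 * π := by positivity
  have hsqrt : ((↑π / -b : ℂ) ^ (1/2 : ℂ)) * ((↑π / -b : ℂ) ^ (1/2 : ℂ)) = ((sg^2 * π : ℝ) : ℂ) := by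
    rw [hnb, ← Complex.cpow_add _ _ (by exact_mod_cast hpos.ne')]
    norm_num
  calc (↑π / -b) ^ (1/2 : ℂ) * Complex.exp (d1 - c1^2/(4*b)) *
        ((↑π / -b) ^ (1/2 : ℂ) * Complex.exp (d2 - c2^2/(4*b)))
      = ((↑π / -b) ^ (1/2 : ℂ) * (↑π / -b) ^ (1/2 : ℂ)) *
        Complex.exp ((d1 - c1^2/(4*b)) + (d2 - c2^2/(4*b))) := by
        rw [Complex.exp_add]; ring
    _ = _ := by
        rw [hsqrt, mul_assoc, ← Complex.exp_add]
        congr 2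
        have hdiv : ∀ c : ℂ, c^2/(4*b) = -((sg:ℂ)^2*c^2/4) := by
          intro c; rw [hbdef]; field_simp
        rw [hdiv, hdiv, hc1, hd1, hc2, hd2]
        have hI : (Complex.I)^2 = -1 := Complex.I_sq
        have hcs : (Complex.cos θ)^2 + (Complex.sin θ)^2 = 1 := Complex.cos_sq_add_sin_sq _
        push_cast
        have hss : (sg:ℂ) * ((sg:ℂ))⁻¹ = 1 := mul_inv_cancel₀ hs
        linear_combination ((sg:ℂ)^2*(π:ℂ)^2/(lam:ℂ)^2*((Complex.cos θ - 1)^2 + (Complex.sin θ)^2)) * hI - ((sg:ℂ)^2*(π:ℂ)^2/(lam:ℂ)^2) * hcs + (((sg:ℂ)*((sg:ℂ))⁻¹ + 1) * ((π:ℂ)*I*(Complex.cos θ)*((lam:ℂ))⁻¹*x - (π:ℂ)*I*((lam:ℂ))⁻¹*x + x^2*(((sg:ℂ))⁻¹)^2/4 + (π:ℂ)*I*((lam:ℂ))⁻¹*y*(Complex.sin θ) + y^2*(((sg:ℂ))⁻¹)^2/4)) * hss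
end

section
/- For every p = (x,y,θ) ∈ ℝ²×ℝ, the squared cortical distance from p to the origin equals d²(p, (0,0,0)) = 2σ²π − 2σ²π · exp( −x²/(4σ²) − y²/(4σ²) − 2σ²π²(1 − cos θ)/λ² ) · cos( π·( x(1 + cos θ) + y sin θ )/λ ). -/
open MeasureTheory

/-- The cortical distance `d(p,q) = ‖ψ_p − ψ_q‖_{L²}`. -/
noncomputable def cdist (lam sg : ℝ) (p q : ℝ × ℝ × ℝ) : ℝ :=
  Real.sqrt (∫ w : ℝ × ℝ, ‖gabor lam sg p w - gabor lam sg q w‖ ^ 2)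

namespace GaborAux

open Complex Real

lemma sqform (a b : ℝ) :
    ((a:ℂ) + (b:ℂ)*Complex.I)^2 = ((a^2-b^2 : ℝ):ℂ) + ((2*a*b : ℝ):ℂ)*Complex.I := by
  push_cast
  linear_combination (b:ℂ)^2 * Complex.I_sq

lemma normSq_mother (lam sg u v : ℝ) : Complex.normSq (gaborMother lam sg (u, v))
    = Real.exp (-((u^2+v^2) / sg^2)) := by
  have h1 : ‖gaborMother lam sg (u, v)‖
      = Real.exp (-((u ^ 2 + v ^ 2) / (2 * sg ^ 2))) := by
    simp [gaborMother, map_mul, Complex.norm_exp]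
    norm_cast
    rw [← Complex.ofReal_ofNat, ← Complex.ofReal_mul, ← Complex.ofReal_div, Complex.ofReal_re]
  rw [← Complex.sq_norm, h1, sq, ← Real.exp_add]
  ring_nf

lemma normSq_gabor (lam sg : ℝ) (x y θ : ℝ) (w : ℝ × ℝ) :
    Complex.normSq (gabor lam sg (x, y, θ) w) =
      Real.exp (-((w.1 - x)^2 / sg^2)) * Real.exp (-((w.2 - y)^2 / sg^2)) := by
  have pyth := Real.sin_sq_add_cos_sq (-θ)
  simp only [gabor, rot, Prod.fst_sub, Prod.snd_sub]
  rw [normSq_mother, ← Real.exp_add]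
  congr 1
  linear_combination (-(((w.1 - x)^2 + (w.2 - y)^2)) / sg^2) * pyth

lemma cross_eq (lam sg : ℝ) (x y θ : ℝ) (w : ℝ × ℝ) :
    gabor lam sg (x, y, θ) w * (starRingEnd ℂ) (gabor lam sg (0, 0, 0) w) =
      Complex.exp (((-(1/sg^2) : ℝ) : ℂ) * (w.1:ℂ)^2
          + (((x/sg^2 : ℝ):ℂ) + ((2*Real.pi/lam*(Real.cos θ - 1) : ℝ):ℂ) * Complex.I) * (w.1:ℂ)
          + (((-(x^2/(2*sg^2)) : ℝ):ℂ) + ((-(2*Real.pi/lam*(x*Real.cos θ)) : ℝ):ℂ) * Complex.I)) *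
      Complex.exp (((-(1/sg^2) : ℝ) : ℂ) * (w.2:ℂ)^2
          + (((y/sg^2 : ℝ):ℂ) + ((2*Real.pi/lam*(Real.sin θ) : ℝ):ℂ) * Complex.I) * (w.2:ℂ)
          + (((-(y^2/(2*sg^2)) : ℝ):ℂ) + ((-(2*Real.pi/lam*(y*Real.sin θ)) : ℝ):ℂ) * Complex.I)) := by
  have pyth : (Complex.sin θ)^2 + (Complex.cos θ)^2 = 1 := Complex.sin_sq_add_cos_sq θ
  simp only [gabor, rot, Prod.fst_sub, Prod.snd_sub, neg_zero, Real.cos_neg, Real.sin_neg,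
    Real.cos_zero, Real.sin_zero, gaborMother]
  rw [map_mul, ← Complex.exp_conj, ← Complex.exp_conj]
  rw [← Complex.exp_add, ← Complex.exp_add, ← Complex.exp_add, ← Complex.exp_add]
  congr 1
  simp only [map_div₀, map_mul, Complex.conj_I, Complex.conj_ofReal, map_ofNat, map_neg]
  push_cast
  linear_combination (-(((w.1:ℂ)-(x:ℂ))^2 + ((w.2:ℂ)-(y:ℂ))^2)/(2*(sg:ℂ)^2)) * pyth

/-- the key quadratic-exponent computation -/
lemma quadA (lam sg x P Q : ℝ) (hlam : 0 < lam) (hsg : 0 < sg) :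
    ((((-(x^2/(2*sg^2)) : ℝ):ℂ) + ((-(2*Real.pi/lam*(x*Q)) : ℝ):ℂ) * Complex.I)
      - (((x/sg^2 : ℝ):ℂ) + ((2*Real.pi/lam*P : ℝ):ℂ) * Complex.I)^2
        / (4 * ((-(1/sg^2) : ℝ) : ℂ)))
    = (((-(x^2/(4*sg^2)) - sg^2*Real.pi^2*P^2/lam^2 : ℝ)):ℂ)
      + (((Real.pi*x*P/lam - 2*Real.pi*x*Q/lam : ℝ)):ℂ) * Complex.I := by
  have hs : sg ≠ 0 := ne_of_gt hsg
  have hl : lam ≠ 0 := ne_of_gt hlam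
  have hinv : ∀ z : ℂ, z / (4 * ((-(1/sg^2) : ℝ) : ℂ)) = z * ((-(sg^2/4) : ℝ):ℂ) := by
    intro z
    rw [div_eq_mul_inv]
    congr 1
    push_cast
    rw [inv_eq_iff_eq_inv]
    field_simp
  rw [hinv, sqform]
  apply Complex.ext <;>
    simp only [Complex.add_re, Complex.sub_re, Complex.mul_re, Complex.mul_im, Complex.add_im,
      Complex.sub_im, Complex.ofReal_re, Complex.ofReal_im, Complex.I_re, Complex.I_im,
      mul_zero, zero_mul, mul_one, sub_zero, zero_sub, add_zero, zero_add] <;>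
    field_simp <;> ring

lemma gauss_int1 (s c : ℝ) (hs : 0 < s) :
    ∫ u : ℝ, Real.exp (-((u - c)^2 / s^2)) = Real.sqrt (Real.pi * s^2) := by
  have h : ∀ u : ℝ, -((u - c)^2 / s^2) = -(1/s^2) * (u - c)^2 := by intro u; ring
  simp_rw [h]
  rw [show (fun u : ℝ => Real.exp (-(1/s^2) * (u - c)^2))
      = fun u : ℝ => (fun t : ℝ => Real.exp (-(1/s^2) * t^2)) (u - c) from rfl]
  rw [integral_sub_right_eq_self (fun t : ℝ => Real.exp (-(1/s^2) * t^2)) c]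
  rw [integral_gaussian]
  congr 1
  field_simp

lemma gauss_integrable1 (s c : ℝ) (hs : 0 < s) :
    Integrable (fun u : ℝ => Real.exp (-((u - c)^2 / s^2))) := by
  have h : ∀ u : ℝ, -((u - c)^2 / s^2) = -(1/s^2) * (u - c)^2 := by intro u; ring
  simp_rw [h]
  exact (integrable_exp_neg_mul_sq (by positivity : (0:ℝ) < 1/s^2)).comp_sub_right c

end GaborAux

open GaborAux Complex in
/-- Explicit formula for the squared cortical distance from `p = (x,y,θ)` to the
origin:
`d²(p,0) = 2σ²π − 2σ²π · exp(−x²/(4σ²) − y²/(4σ²) − 2σ²π²(1−cos θ)/λ²)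
  · cos(π(x(1+cos θ)+y sin θ)/λ)`. -/
theorem statement2 (lam sg : ℝ) (hlam : 0 < lam) (hsg : 0 < sg) (x y θ : ℝ) :
    cdist lam sg (x, y, θ) (0, 0, 0) ^ 2 =
      2 * sg ^ 2 * Real.pi -
        2 * sg ^ 2 * Real.pi *
          Real.exp (-(x ^ 2 / (4 * sg ^ 2)) - y ^ 2 / (4 * sg ^ 2) -
            2 * sg ^ 2 * Real.pi ^ 2 * (1 - Real.cos θ) / lam ^ 2) *
          Real.cos (Real.pi * (x * (1 + Real.cos θ) + y * Real.sin θ) / lam) := by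
  have hs : sg ≠ 0 := ne_of_gt hsg
  have hl : lam ≠ 0 := ne_of_gt hlam
  have hb : (((-(1/sg^2) : ℝ) : ℂ)).re < 0 := by
    simp only [Complex.ofReal_re]
    have : (0:ℝ) < 1/sg^2 := by positivity
    linarith
  -- abbreviations for the quadratic coefficients
  set c1 : ℂ := (((x/sg^2 : ℝ)):ℂ) + (((2*Real.pi/lam*(Real.cos θ - 1) : ℝ)):ℂ) * Complex.I with hc1
  set d1 : ℂ := (((-(x^2/(2*sg^2)) : ℝ)):ℂ) + (((-(2*Real.pi/lam*(x*Real.cos θ)) : ℝ)):ℂ) * Complex.I with hd1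
  set c2 : ℂ := (((y/sg^2 : ℝ)):ℂ) + (((2*Real.pi/lam*(Real.sin θ) : ℝ)):ℂ) * Complex.I with hc2
  set d2 : ℂ := (((-(y^2/(2*sg^2)) : ℝ)):ℂ) + (((-(2*Real.pi/lam*(y*Real.sin θ)) : ℝ)):ℂ) * Complex.I with hd2
  -- integrability facts
  have hg1 : Integrable (fun w : ℝ × ℝ =>
      Real.exp (-((w.1 - x)^2 / sg^2)) * Real.exp (-((w.2 - y)^2 / sg^2))) := by
    rw [Measure.volume_eq_prod]
    exact (gauss_integrable1 sg x hsg).mul_prod (gauss_integrable1 sg y hsg)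
  have hg2 : Integrable (fun w : ℝ × ℝ =>
      Real.exp (-((w.1 - 0)^2 / sg^2)) * Real.exp (-((w.2 - 0)^2 / sg^2))) := by
    rw [Measure.volume_eq_prod]
    exact (gauss_integrable1 sg 0 hsg).mul_prod (gauss_integrable1 sg 0 hsg)
  have hcross : Integrable (fun w : ℝ × ℝ =>
      gabor lam sg (x, y, θ) w * (starRingEnd ℂ) (gabor lam sg (0, 0, 0) w)) := by
    rw [show (fun w : ℝ × ℝ =>
        gabor lam sg (x, y, θ) w * (starRingEnd ℂ) (gabor lam sg (0, 0, 0) w))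
      = fun w : ℝ × ℝ =>
        (fun u : ℝ => Complex.exp (((-(1/sg^2) : ℝ) : ℂ) * (u:ℂ)^2 + c1 * (u:ℂ) + d1)) w.1 *
        (fun u : ℝ => Complex.exp (((-(1/sg^2) : ℝ) : ℂ) * (u:ℂ)^2 + c2 * (u:ℂ) + d2)) w.2
      from funext (cross_eq lam sg x y θ)]
    rw [Measure.volume_eq_prod]
    exact (integrable_cexp_quadratic' hb c1 d1).mul_prod (integrable_cexp_quadratic' hb c2 d2)
  -- the cross integral
  have hcrossint : (∫ w : ℝ × ℝ,
      gabor lam sg (x, y, θ) w * (starRingEnd ℂ) (gabor lam sg (0, 0, 0) w))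
      = ((Real.pi * sg^2 : ℝ) : ℂ) *
        Complex.exp (
          (((-(x^2/(4*sg^2)) - sg^2*Real.pi^2*(Real.cos θ - 1)^2/lam^2)
            + (-(y^2/(4*sg^2)) - sg^2*Real.pi^2*(Real.sin θ)^2/lam^2) : ℝ) : ℂ)
          + (((Real.pi*x*(Real.cos θ - 1)/lam - 2*Real.pi*x*(Real.cos θ)/lam)
            + (Real.pi*y*(Real.sin θ)/lam - 2*Real.pi*y*(Real.sin θ)/lam) : ℝ) : ℂ) * Complex.I) := by
    rw [show (fun w : ℝ × ℝ =>
        gabor lam sg (x, y, θ) w * (starRingEnd ℂ) (gabor lam sg (0, 0, 0) w))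
      = fun w : ℝ × ℝ =>
        (fun u : ℝ => Complex.exp (((-(1/sg^2) : ℝ) : ℂ) * (u:ℂ)^2 + c1 * (u:ℂ) + d1)) w.1 *
        (fun u : ℝ => Complex.exp (((-(1/sg^2) : ℝ) : ℂ) * (u:ℂ)^2 + c2 * (u:ℂ) + d2)) w.2
      from funext (cross_eq lam sg x y θ)]
    rw [Measure.volume_eq_prod,
      MeasureTheory.integral_prod_mul
        (f := fun u : ℝ => Complex.exp (((-(1/sg^2) : ℝ) : ℂ) * (u:ℂ)^2 + c1 * (u:ℂ) + d1))
        (g := fun u : ℝ => Complex.exp (((-(1/sg^2) : ℝ) : ℂ) * (u:ℂ)^2 + c2 * (u:ℂ) + d2))]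
    rw [integral_cexp_quadratic hb c1 d1, integral_cexp_quadratic hb c2 d2]
    have hbase : ((Real.pi : ℂ) / -(((-(1/sg^2) : ℝ)):ℂ)) = ((Real.pi * sg^2 : ℝ) : ℂ) := by
      push_cast
      field_simp
    rw [hbase]
    have hX : ((Real.pi * sg^2 : ℝ) : ℂ) ≠ 0 := by
      simp only [ne_eq, Complex.ofReal_eq_zero]
      positivity
    have hsq : ((Real.pi * sg^2 : ℝ) : ℂ) ^ ((1:ℂ)/2) * ((Real.pi * sg^2 : ℝ) : ℂ) ^ ((1:ℂ)/2)
        = ((Real.pi * sg^2 : ℝ) : ℂ) := by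
      rw [← Complex.cpow_add _ _ hX]
      norm_num
    rw [mul_mul_mul_comm, hsq, ← Complex.exp_add]
    congr 1
    rw [hd1, hc1, quadA lam sg x (Real.cos θ - 1) (Real.cos θ) hlam hsg,
      hd2, hc2, quadA lam sg y (Real.sin θ) (Real.sin θ) hlam hsg]
    push_cast
    ring
  -- value of the gaussian integrals
  have hIg1 : (∫ w : ℝ × ℝ,
      Real.exp (-((w.1 - x)^2 / sg^2)) * Real.exp (-((w.2 - y)^2 / sg^2)))
      = Real.pi * sg^2 := by
    rw [Measure.volume_eq_prod,
      MeasureTheory.integral_prod_mul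
        (f := fun u : ℝ => Real.exp (-((u - x)^2 / sg^2)))
        (g := fun u : ℝ => Real.exp (-((u - y)^2 / sg^2))),
      gauss_int1 sg x hsg, gauss_int1 sg y hsg,
      Real.mul_self_sqrt (by positivity)]
  have hIg2 : (∫ w : ℝ × ℝ,
      Real.exp (-((w.1 - 0)^2 / sg^2)) * Real.exp (-((w.2 - 0)^2 / sg^2)))
      = Real.pi * sg^2 := by
    rw [Measure.volume_eq_prod,
      MeasureTheory.integral_prod_mul
        (f := fun u : ℝ => Real.exp (-((u - 0)^2 / sg^2)))
        (g := fun u : ℝ => Real.exp (-((u - 0)^2 / sg^2))),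
      gauss_int1 sg 0 hsg, Real.mul_self_sqrt (by positivity)]
  -- expand the square of the distance
  unfold cdist
  rw [Real.sq_sqrt (integral_nonneg (fun w => by positivity))]
  have hpt : (fun w : ℝ × ℝ =>
      ‖gabor lam sg (x, y, θ) w - gabor lam sg (0, 0, 0) w‖ ^ 2)
      = fun w : ℝ × ℝ =>
        (Real.exp (-((w.1 - x)^2 / sg^2)) * Real.exp (-((w.2 - y)^2 / sg^2))
          + Real.exp (-((w.1 - 0)^2 / sg^2)) * Real.exp (-((w.2 - 0)^2 / sg^2)))
        - 2 * (gabor lam sg (x, y, θ) w * (starRingEnd ℂ) (gabor lam sg (0, 0, 0) w)).re := by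
    funext w
    rw [Complex.sq_norm, Complex.normSq_sub, normSq_gabor lam sg x y θ w,
      normSq_gabor lam sg 0 0 0 w]
  rw [hpt]
  have hcross_re : Integrable (fun w : ℝ × ℝ =>
      (gabor lam sg (x, y, θ) w * (starRingEnd ℂ) (gabor lam sg (0, 0, 0) w)).re) := by
    simpa using hcross.re
  have hsum : Integrable (fun w : ℝ × ℝ =>
      Real.exp (-((w.1 - x)^2 / sg^2)) * Real.exp (-((w.2 - y)^2 / sg^2))
        + Real.exp (-((w.1 - 0)^2 / sg^2)) * Real.exp (-((w.2 - 0)^2 / sg^2))) := hg1.add hg2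
  rw [MeasureTheory.integral_sub hsum (hcross_re.const_mul 2),
    MeasureTheory.integral_add hg1 hg2, MeasureTheory.integral_const_mul,
    hIg1, hIg2]
  have hre : (∫ w : ℝ × ℝ,
      (gabor lam sg (x, y, θ) w * (starRingEnd ℂ) (gabor lam sg (0, 0, 0) w)).re)
      = (∫ w : ℝ × ℝ,
        gabor lam sg (x, y, θ) w * (starRingEnd ℂ) (gabor lam sg (0, 0, 0) w)).re := by
    simpa using integral_re hcross
  rw [hre, hcrossint, Complex.re_ofReal_mul, Complex.exp_re]
  simp only [Complex.add_re, Complex.add_im, Complex.ofReal_re, Complex.ofReal_im,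
    Complex.mul_re, Complex.mul_im, Complex.I_re, Complex.I_im, mul_zero, mul_one,
    zero_mul, sub_zero, zero_add, add_zero, zero_sub]
  have hER : -(x^2/(4*sg^2)) - sg^2*Real.pi^2*(Real.cos θ - 1)^2/lam^2
        + (-(y^2/(4*sg^2)) - sg^2*Real.pi^2*(Real.sin θ)^2/lam^2)
      = -(x ^ 2 / (4 * sg ^ 2)) - y ^ 2 / (4 * sg ^ 2) -
          2 * sg ^ 2 * Real.pi ^ 2 * (1 - Real.cos θ) / lam ^ 2 := by
    linear_combination (-(sg^2*Real.pi^2/lam^2)) * Real.sin_sq_add_cos_sq θ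
  have hEI : Real.pi*x*(Real.cos θ - 1)/lam - 2*Real.pi*x*(Real.cos θ)/lam
        + (Real.pi*y*(Real.sin θ)/lam - 2*Real.pi*y*(Real.sin θ)/lam)
      = -(Real.pi * (x * (1 + Real.cos θ) + y * Real.sin θ) / lam) := by
    ring
  rw [hER, hEI, Real.cos_neg]
  ring
end

section
/- The cortical distance separates points of the feature space ℝ²×S¹: for p = (x,y,θ) with θ ∈ (−π, π], d(p, (0,0,0)) = 0 if and only if x = 0, y = 0 and θ = 0. -/
open MeasureTheory

lemma rot_norm_sq (φ : ℝ) (w : ℝ × ℝ) :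
    (rot φ w).1 ^ 2 + (rot φ w).2 ^ 2 = w.1 ^ 2 + w.2 ^ 2 := by
  have h := Real.sin_sq_add_cos_sq φ
  simp only [rot]
  nlinarith [h]

lemma abs_gaborMother (lam sg : ℝ) (w : ℝ × ℝ) :
    ‖gaborMother lam sg w‖ = Real.exp (-((w.1 ^ 2 + w.2 ^ 2) / (2 * sg ^ 2))) := by
  unfold gaborMother
  rw [norm_mul]
  have h1 : (2 * (Real.pi : ℂ) * Complex.I * (w.1 : ℂ) / (lam : ℂ)) =
      ((2 * Real.pi * w.1 / lam : ℝ) : ℂ) * Complex.I := by push_cast; ring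
  rw [h1, Complex.norm_exp_ofReal_mul_I, one_mul, ← Complex.ofReal_neg,
    Complex.norm_exp_ofReal]

lemma abs_gabor (lam sg : ℝ) (p : ℝ × ℝ × ℝ) (w : ℝ × ℝ) :
    ‖gabor lam sg p w‖ =
      Real.exp (-(((w.1 - p.1) ^ 2 + (w.2 - p.2.1) ^ 2) / (2 * sg ^ 2))) := by
  unfold gabor
  rw [abs_gaborMother, rot_norm_sq]
  simp [Prod.fst_sub, Prod.snd_sub]

lemma continuous_gabor (lam sg : ℝ) (p : ℝ × ℝ × ℝ) : Continuous (gabor lam sg p) := by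
  unfold gabor gaborMother rot
  fun_prop

lemma integrable_gauss2 (sg : ℝ) (hsg : 0 < sg) (x y : ℝ) :
    Integrable (fun w : ℝ × ℝ => Real.exp (-(((w.1 - x) ^ 2 + (w.2 - y) ^ 2) / sg ^ 2))) := by
  have h1 : Integrable (fun t : ℝ => Real.exp (-(1 / sg ^ 2) * t ^ 2)) :=
    integrable_exp_neg_mul_sq (by positivity)
  have hx := h1.comp_sub_right x
  have hy := h1.comp_sub_right y
  have h := hx.mul_prod hy
  have heq : (fun w : ℝ × ℝ => Real.exp (-(((w.1 - x) ^ 2 + (w.2 - y) ^ 2) / sg ^ 2))) =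
      fun w : ℝ × ℝ => Real.exp (-(1 / sg ^ 2) * (w.1 - x) ^ 2) *
        Real.exp (-(1 / sg ^ 2) * (w.2 - y) ^ 2) := by
    funext w
    rw [← Real.exp_add]
    ring_nf
  rw [heq]
  exact h

lemma gabor_eval (lam sg θ t : ℝ) :
    gabor lam sg ((0:ℝ), (0:ℝ), θ) (t, 0) =
      Complex.exp (2 * (Real.pi : ℂ) * Complex.I * ((t * Real.cos θ : ℝ) : ℂ) / (lam : ℂ)) *
        Complex.exp (-((t ^ 2 / (2 * sg ^ 2) : ℝ) : ℂ)) := by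
  have h1 : ((t, 0) : ℝ × ℝ) - ((0 : ℝ), (0 : ℝ)) = (t, (0:ℝ)) := by simp
  have h2 : rot (-θ) (t, 0) = (t * Real.cos θ, -(t * Real.sin θ)) := by
    simp [rot, Real.cos_neg, Real.sin_neg]
  have h3 : (t * Real.cos θ) ^ 2 + (-(t * Real.sin θ)) ^ 2 = t ^ 2 := by
    nlinarith [Real.sin_sq_add_cos_sq θ]
  show gaborMother lam sg (rot (-θ) (((t, 0) : ℝ × ℝ) - ((0 : ℝ), (0 : ℝ)))) = _
  rw [h1, h2]
  unfold gaborMother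
  rw [h3]

/-- The cortical distance separates the points of `ℝ² × S¹`: for `θ ∈ (−π, π]`,
`d((x,y,θ),(0,0,0)) = 0` iff `x = 0`, `y = 0` and `θ = 0`. -/
theorem statement4 (lam sg : ℝ) (hlam : 0 < lam) (hsg : 0 < sg) (x y θ : ℝ)
    (hθ : θ ∈ Set.Ioc (-Real.pi) Real.pi) :
    cdist lam sg (x, y, θ) (0, 0, 0) = 0 ↔ x = 0 ∧ y = 0 ∧ θ = 0 := by
  constructor
  · intro h0
    -- the squared-difference function
    set f := gabor lam sg (x, y, θ) with hf
    set g := gabor lam sg ((0:ℝ), (0:ℝ), (0:ℝ)) with hg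
    set F : ℝ × ℝ → ℝ := fun w => ‖f w - g w‖ ^ 2 with hF
    have hF_cont : Continuous F :=
      (continuous_norm.comp
        ((continuous_gabor lam sg _).sub (continuous_gabor lam sg _))).pow 2
    have hF_nonneg : ∀ w, 0 ≤ F w := fun w => by positivity
    -- integrability
    have hsq : ∀ (p : ℝ × ℝ × ℝ) (w : ℝ × ℝ),
        ‖gabor lam sg p w‖ ^ 2 =
          Real.exp (-(((w.1 - p.1) ^ 2 + (w.2 - p.2.1) ^ 2) / sg ^ 2)) := by
      intro p w
      rw [abs_gabor, sq, ← Real.exp_add]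
      congr 1
      field_simp
      ring
    have hG : Integrable (fun w : ℝ × ℝ =>
        2 * Real.exp (-(((w.1 - x) ^ 2 + (w.2 - y) ^ 2) / sg ^ 2)) +
        2 * Real.exp (-(((w.1 - 0) ^ 2 + (w.2 - 0) ^ 2) / sg ^ 2))) :=
      ((integrable_gauss2 sg hsg x y).const_mul 2).add
        ((integrable_gauss2 sg hsg 0 0).const_mul 2)
    have hF_int : Integrable F := by
      refine hG.mono' hF_cont.aestronglyMeasurable (Filter.Eventually.of_forall fun w => ?_)
      have hfw := hsq (x, y, θ) w
      have hgw := hsq ((0:ℝ), (0:ℝ), (0:ℝ)) w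
      simp only at hfw hgw
      have htri : ‖f w - g w‖ ≤ ‖f w‖ + ‖g w‖ := by
        simpa using norm_sub_le (f w) (g w)
      have h1 : F w ≤ 2 * ‖f w‖ ^ 2 + 2 * ‖g w‖ ^ 2 := by
        have hA : (0:ℝ) ≤ ‖f w - g w‖ := norm_nonneg _
        have hFw : F w = ‖f w - g w‖ ^ 2 := rfl
        have hsqle : ‖f w - g w‖ ^ 2 ≤
            (‖f w‖ + ‖g w‖) ^ 2 := by
          exact pow_le_pow_left₀ hA htri 2
        rw [hFw]
        nlinarith [sq_nonneg (‖f w‖ - ‖g w‖)]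
      have hnorm : ‖F w‖ = F w := Real.norm_of_nonneg (hF_nonneg w)
      rw [hnorm]
      calc F w ≤ 2 * ‖f w‖ ^ 2 + 2 * ‖g w‖ ^ 2 := h1
        _ = 2 * Real.exp (-(((w.1 - x) ^ 2 + (w.2 - y) ^ 2) / sg ^ 2)) +
            2 * Real.exp (-(((w.1 - 0) ^ 2 + (w.2 - 0) ^ 2) / sg ^ 2)) := by
              rw [hf, hg, hfw, hgw]
    -- the integral is zero
    have hI0 : (∫ w : ℝ × ℝ, F w) = 0 := by
      have h1 : (0:ℝ) ≤ ∫ w : ℝ × ℝ, F w := integral_nonneg hF_nonneg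
      unfold cdist at h0
      have h2 := Real.sqrt_eq_zero'.1 h0
      exact le_antisymm h2 h1
    have hae : F =ᵐ[volume] 0 := (integral_eq_zero_iff_of_nonneg hF_nonneg hF_int).1 hI0
    have hFeq : F = 0 := (Continuous.ae_eq_iff_eq volume hF_cont continuous_const).1 hae
    have key : ∀ w, f w = g w := by
      intro w
      have h2 : ‖f w - g w‖ ^ 2 = 0 := congrFun hFeq w
      have h1 : ‖f w - g w‖ = 0 :=
        pow_eq_zero_iff (by norm_num : (2:ℕ) ≠ 0) |>.1 h2
      exact sub_eq_zero.1 (norm_eq_zero.1 h1)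
    -- extract x = 0 and y = 0
    have habs : ∀ w : ℝ × ℝ, ((w.1 - x) ^ 2 + (w.2 - y) ^ 2) = w.1 ^ 2 + w.2 ^ 2 := by
      intro w
      have h1 : ‖f w‖ = ‖g w‖ := by rw [key w]
      rw [hf, hg, abs_gabor, abs_gabor] at h1
      have h2 := Real.exp_eq_exp.1 h1
      have hsg2 : (2 * sg ^ 2) ≠ 0 := by positivity
      field_simp at h2
      linarith [h2]
    have h00 := habs (x, y)
    simp only [sub_self] at h00
    norm_num at h00
    have hx2 : x ^ 2 = 0 := by nlinarith [sq_nonneg x, sq_nonneg y]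
    have hy2 : y ^ 2 = 0 := by nlinarith [sq_nonneg x, sq_nonneg y]
    have hx : x = 0 := pow_eq_zero_iff (by norm_num : (2:ℕ) ≠ 0) |>.1 hx2
    have hy : y = 0 := pow_eq_zero_iff (by norm_num : (2:ℕ) ≠ 0) |>.1 hy2
    refine ⟨hx, hy, ?_⟩
    -- extract θ = 0
    subst hx hy
    have hcos : Real.cos θ = 1 := by
      by_contra hc
      have hc1 : Real.cos θ - 1 ≠ 0 := sub_ne_zero.2 hc
      set t : ℝ := lam / (2 * (Real.cos θ - 1)) with ht
      have hk := key (t, 0)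
      rw [hf, hg, gabor_eval, gabor_eval] at hk
      rw [Real.cos_zero, mul_one] at hk
      have hk2 : Complex.exp (2 * (Real.pi : ℂ) * Complex.I * ((t * Real.cos θ : ℝ) : ℂ) / (lam : ℂ)) =
          Complex.exp (2 * (Real.pi : ℂ) * Complex.I * ((t : ℝ) : ℂ) / (lam : ℂ)) :=
        mul_right_cancel₀ (Complex.exp_ne_zero _) hk
      have hone : Complex.exp (2 * (Real.pi : ℂ) * Complex.I * ((t * Real.cos θ : ℝ) : ℂ) / (lam : ℂ)
          - 2 * (Real.pi : ℂ) * Complex.I * ((t : ℝ) : ℂ) / (lam : ℂ)) = 1 := by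
        rw [Complex.exp_sub, hk2, div_self (Complex.exp_ne_zero _)]
      have hlamC : (lam : ℂ) ≠ 0 := Complex.ofReal_ne_zero.2 (ne_of_gt hlam)
      have hreal : t * Real.cos θ - t = lam / 2 := by
        rw [ht]
        field_simp
      have hAB : (2 * (Real.pi : ℂ) * Complex.I * ((t * Real.cos θ : ℝ) : ℂ) / (lam : ℂ)
          - 2 * (Real.pi : ℂ) * Complex.I * ((t : ℝ) : ℂ) / (lam : ℂ)) = (Real.pi : ℂ) * Complex.I := by
        have hc2 : (2 * (Real.pi : ℂ) * Complex.I * ((t * Real.cos θ : ℝ) : ℂ) / (lam : ℂ)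
            - 2 * (Real.pi : ℂ) * Complex.I * ((t : ℝ) : ℂ) / (lam : ℂ))
            = 2 * (Real.pi : ℂ) * Complex.I * ((t * Real.cos θ - t : ℝ) : ℂ) / (lam : ℂ) := by
          push_cast
          ring
        rw [hc2, hreal]
        push_cast
        field_simp
      rw [hAB, Complex.exp_pi_mul_I] at hone
      norm_num at hone
    have hθ0 : θ = 0 := by
      have hpi := Real.pi_pos
      have h1 : -(2 * Real.pi) < θ := by
        have := hθ.1; linarith
      have h2 : θ < 2 * Real.pi := by
        have := hθ.2; linarith
      exact (Real.cos_eq_one_iff_of_lt_of_lt h1 h2).1 hcos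
    exact hθ0
  · rintro ⟨rfl, rfl, rfl⟩
    simp [cdist]
end

section
/- As (x,y,θ) → (0,0,0) in ℝ³, the squared cortical distance admits the second-order expansion d²((x,y,θ), (0,0,0)) = 2σ²π·[ (1/(4σ²) + 2π²/λ²)·x² + (1/(4σ²))·y² + (σ²π²/λ²)·θ² ] + o(x² + y² + θ²). -/
open MeasureTheory Asymptotics Filter

lemma gabor_apply (lam sg : ℝ) (p : ℝ × ℝ × ℝ) (w : ℝ × ℝ) :
    gabor lam sg p w =
      Complex.exp ((2 * Real.pi * ((w.1 - p.1) * Real.cos p.2.2 + (w.2 - p.2.1) * Real.sin p.2.2) / lam : ℝ) * Complex.I) *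
        Complex.exp ((-(((w.1 - p.1) ^ 2 + (w.2 - p.2.1) ^ 2) / (2 * sg ^ 2)) : ℝ)) := by
  unfold gabor gaborMother rot
  simp only [Prod.fst_sub, Prod.snd_sub, Real.cos_neg, Real.sin_neg]
  congr 1
  · congr 1
    push_cast
    ring
  · congr 1
    rw [← Complex.ofReal_neg, Complex.ofReal_inj]
    linear_combination (-(((w.1 - p.1) ^ 2 + (w.2 - p.2.1) ^ 2)) / (2 * sg ^ 2)) *
      Real.sin_sq_add_cos_sq p.2.2

lemma gabor_zero_apply (lam sg : ℝ) (w : ℝ × ℝ) :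
    gabor lam sg (0,0,0) w =
      Complex.exp ((2 * Real.pi * w.1 / lam : ℝ) * Complex.I) *
        Complex.exp ((-((w.1 ^ 2 + w.2 ^ 2) / (2 * sg ^ 2)) : ℝ)) := by
  rw [gabor_apply]; norm_num

section setup
variable (lam sg x y θ : ℝ)

lemma cross_pointwise (hlam : 0 < lam) (hsg : 0 < sg) (w : ℝ × ℝ) :
    gabor lam sg (x, y, θ) w * (starRingEnd ℂ) (gabor lam sg (0,0,0) w) =
      Complex.exp (((-(1/sg^2) : ℝ) : ℂ) * w.1^2 +
          (((x/sg^2 : ℝ) : ℂ) + ((2*Real.pi*(Real.cos θ - 1)/lam : ℝ) : ℂ) * Complex.I) * w.1 +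
          (((-(x^2/(2*sg^2)) : ℝ) : ℂ) + ((-(2*Real.pi*x*Real.cos θ/lam) : ℝ) : ℂ) * Complex.I)) *
      Complex.exp (((-(1/sg^2) : ℝ) : ℂ) * w.2^2 +
          (((y/sg^2 : ℝ) : ℂ) + ((2*Real.pi*Real.sin θ/lam : ℝ) : ℂ) * Complex.I) * w.2 +
          (((-(y^2/(2*sg^2)) : ℝ) : ℂ) + ((-(2*Real.pi*y*Real.sin θ/lam) : ℝ) : ℂ) * Complex.I)) := by
  rw [gabor_apply, gabor_zero_apply]
  simp only [map_mul, ← Complex.exp_conj, map_add, map_mul, Complex.conj_ofReal, Complex.conj_I]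
  rw [← Complex.exp_add, ← Complex.exp_add, ← Complex.exp_add, ← Complex.exp_add]
  congr 1
  push_cast
  field_simp
  ring

lemma normSq_gabor (hsg : 0 < sg) (w : ℝ × ℝ) :
    Complex.normSq (gabor lam sg (x, y, θ) w) =
      Real.exp (-(1/sg^2) * (w.1 - x)^2) * Real.exp (-(1/sg^2) * (w.2 - y)^2) := by
  rw [gabor_apply, Complex.normSq_eq_norm_sq]
  rw [norm_mul, Complex.norm_exp, Complex.norm_exp]
  simp only [Complex.re_ofReal_mul, Complex.I_re, mul_zero, Real.exp_zero, one_mul, Complex.ofReal_re]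
  rw [sq, ← Real.exp_add, ← Real.exp_add]
  congr 1
  field_simp
  ring
end setup


lemma sq_ofReal_add_mul_I (a b : ℝ) :
    ((a : ℂ) + (b : ℂ) * Complex.I)^2 = ((a^2 - b^2 : ℝ) : ℂ) + ((2*a*b : ℝ) : ℂ) * Complex.I := by
  push_cast
  linear_combination ((b : ℂ))^2 * Complex.I_sq

lemma quad_exponent (sg : ℝ) (hsg : 0 < sg) (a b p q : ℝ) :
    ((p : ℂ) + (q : ℂ) * Complex.I) - ((a : ℂ) + (b : ℂ) * Complex.I)^2 / (4 * ((-(1/sg^2) : ℝ) : ℂ)) =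
      ((p + sg^2*(a^2 - b^2)/4 : ℝ) : ℂ) + ((q + sg^2*(2*a*b)/4 : ℝ) : ℂ) * Complex.I := by
  rw [sq_ofReal_add_mul_I]
  have h2 : (4 * ((-(1/sg^2) : ℝ) : ℂ)) = ((-(4/sg^2) : ℝ) : ℂ) := by push_cast; ring
  rw [h2]
  have h3 : ((((a^2-b^2 : ℝ)) : ℂ) + (((2*a*b : ℝ)) : ℂ) * Complex.I) / ((-(4/sg^2) : ℝ) : ℂ) =
      (((a^2-b^2)/(-(4/sg^2)) : ℝ) : ℂ) + (((2*a*b)/(-(4/sg^2)) : ℝ) : ℂ) * Complex.I := by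
    push_cast; ring
  rw [h3]
  have e1 : p - (a^2-b^2)/(-(4/sg^2)) = p + sg^2*(a^2 - b^2)/4 := by field_simp; ring
  have e2 : q - (2*a*b)/(-(4/sg^2)) = q + sg^2*(2*a*b)/4 := by field_simp; ring
  push_cast [← e1, ← e2]
  ring

lemma ofReal_add_mul_I_congr {a b c d : ℝ} (h1 : a = c) (h2 : b = d) :
    ((a : ℂ) + (b : ℂ) * Complex.I) = ((c : ℂ) + (d : ℂ) * Complex.I) := by rw [h1, h2]

lemma integral_gauss_shift (sg x : ℝ) (hsg : 0 < sg) :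
    ∫ t : ℝ, Real.exp (-(1/sg^2) * (t - x)^2) = Real.sqrt (Real.pi * sg^2) := by
  rw [MeasureTheory.integral_sub_right_eq_self (μ := volume)
      (fun u : ℝ => Real.exp (-(1/sg^2) * u^2)) x, integral_gaussian]
  congr 1
  field_simp

lemma integrable_gauss_shift (sg x : ℝ) (hsg : 0 < sg) :
    MeasureTheory.Integrable (fun t : ℝ => Real.exp (-(1/sg^2) * (t - x)^2)) := by
  exact (integrable_exp_neg_mul_sq (by positivity)).comp_sub_right x

lemma cdist_sq_eq (lam sg : ℝ) (hlam : 0 < lam) (hsg : 0 < sg) (x y θ : ℝ) :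
    cdist lam sg (x, y, θ) (0,0,0) ^ 2 =
      2 * Real.pi * sg^2 *
        (1 - Real.exp (-((x^2+y^2)/(4*sg^2)) - 2*sg^2*Real.pi^2*(1-Real.cos θ)/lam^2) *
          Real.cos (-(Real.pi*(x*(1+Real.cos θ) + y*Real.sin θ)/lam))) := by
  have hb : (((-(1/sg^2) : ℝ) : ℂ)).re < 0 := by
    simp only [Complex.ofReal_re]
    have : 0 < 1/sg^2 := by positivity
    linarith
  -- abbreviations
  set cu : ℂ := ((x/sg^2 : ℝ) : ℂ) + ((2*Real.pi*(Real.cos θ - 1)/lam : ℝ) : ℂ) * Complex.I with hcu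
  set du : ℂ := ((-(x^2/(2*sg^2)) : ℝ) : ℂ) + ((-(2*Real.pi*x*Real.cos θ/lam) : ℝ) : ℂ) * Complex.I with hdu
  set cv : ℂ := ((y/sg^2 : ℝ) : ℂ) + ((2*Real.pi*Real.sin θ/lam : ℝ) : ℂ) * Complex.I with hcv
  set dv : ℂ := ((-(y^2/(2*sg^2)) : ℝ) : ℂ) + ((-(2*Real.pi*y*Real.sin θ/lam) : ℝ) : ℂ) * Complex.I with hdv
  have hIu : MeasureTheory.Integrable
      (fun t : ℝ => Complex.exp (((-(1/sg^2) : ℝ) : ℂ) * t^2 + cu * t + du)) :=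
    integrable_cexp_quadratic' hb cu du
  have hIv : MeasureTheory.Integrable
      (fun t : ℝ => Complex.exp (((-(1/sg^2) : ℝ) : ℂ) * t^2 + cv * t + dv)) :=
    integrable_cexp_quadratic' hb cv dv
  have hIC : MeasureTheory.Integrable (fun w : ℝ × ℝ =>
      Complex.exp (((-(1/sg^2) : ℝ) : ℂ) * w.1^2 + cu * w.1 + du) *
      Complex.exp (((-(1/sg^2) : ℝ) : ℂ) * w.2^2 + cv * w.2 + dv)) := by
    rw [MeasureTheory.Measure.volume_eq_prod]
    exact hIu.mul_prod hIv
  have hIA : MeasureTheory.Integrable (fun w : ℝ × ℝ =>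
      Real.exp (-(1/sg^2) * (w.1 - x)^2) * Real.exp (-(1/sg^2) * (w.2 - y)^2)) := by
    rw [MeasureTheory.Measure.volume_eq_prod]
    exact (integrable_gauss_shift sg x hsg).mul_prod (integrable_gauss_shift sg y hsg)
  have hIB : MeasureTheory.Integrable (fun w : ℝ × ℝ =>
      Real.exp (-(1/sg^2) * (w.1 - 0)^2) * Real.exp (-(1/sg^2) * (w.2 - 0)^2)) := by
    rw [MeasureTheory.Measure.volume_eq_prod]
    exact (integrable_gauss_shift sg 0 hsg).mul_prod (integrable_gauss_shift sg 0 hsg)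
  -- pointwise identity for the squared norm
  have key : ∀ w : ℝ × ℝ,
      ‖gabor lam sg (x, y, θ) w - gabor lam sg (0,0,0) w‖ ^ 2 =
        Real.exp (-(1/sg^2) * (w.1 - x)^2) * Real.exp (-(1/sg^2) * (w.2 - y)^2) +
        Real.exp (-(1/sg^2) * (w.1 - 0)^2) * Real.exp (-(1/sg^2) * (w.2 - 0)^2) -
        2 * (Complex.exp (((-(1/sg^2) : ℝ) : ℂ) * w.1^2 + cu * w.1 + du) *
             Complex.exp (((-(1/sg^2) : ℝ) : ℂ) * w.2^2 + cv * w.2 + dv)).re := by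
    intro w
    rw [Complex.sq_norm, Complex.normSq_sub, ← cross_pointwise lam sg x y θ hlam hsg w,
        normSq_gabor lam sg x y θ hsg w]
    have h0 : Complex.normSq (gabor lam sg (0,0,0) w) =
        Real.exp (-(1/sg^2) * (w.1 - 0)^2) * Real.exp (-(1/sg^2) * (w.2 - 0)^2) := by
      have := normSq_gabor lam sg 0 0 0 hsg w
      simpa using this
    rw [h0]
  -- now compute the integral
  unfold cdist
  rw [Real.sq_sqrt (MeasureTheory.integral_nonneg fun w => by positivity)]
  simp only [key]
  have hICre : MeasureTheory.Integrable (fun w : ℝ × ℝ =>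
      2 * (Complex.exp (((-(1/sg^2) : ℝ) : ℂ) * w.1^2 + cu * w.1 + du) *
           Complex.exp (((-(1/sg^2) : ℝ) : ℂ) * w.2^2 + cv * w.2 + dv)).re) := by
    have := (hIC.re).const_mul 2
    simpa [RCLike.re_to_complex] using this
  have hIAB : MeasureTheory.Integrable (fun w : ℝ × ℝ =>
      Real.exp (-(1/sg^2) * (w.1 - x)^2) * Real.exp (-(1/sg^2) * (w.2 - y)^2) +
      Real.exp (-(1/sg^2) * (w.1 - 0)^2) * Real.exp (-(1/sg^2) * (w.2 - 0)^2)) := hIA.add hIB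
  rw [MeasureTheory.integral_sub hIAB hICre,
      MeasureTheory.integral_add hIA hIB, MeasureTheory.integral_const_mul]
  have hreInt : (∫ w : ℝ × ℝ, (Complex.exp (((-(1/sg^2) : ℝ) : ℂ) * w.1^2 + cu * w.1 + du) *
        Complex.exp (((-(1/sg^2) : ℝ) : ℂ) * w.2^2 + cv * w.2 + dv)).re)
      = (∫ w : ℝ × ℝ, Complex.exp (((-(1/sg^2) : ℝ) : ℂ) * w.1^2 + cu * w.1 + du) *
        Complex.exp (((-(1/sg^2) : ℝ) : ℂ) * w.2^2 + cv * w.2 + dv)).re := by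
    have := integral_re hIC
    simpa using this
  rw [hreInt]
  have iA : (∫ w : ℝ × ℝ, Real.exp (-(1/sg^2) * (w.1 - x)^2) * Real.exp (-(1/sg^2) * (w.2 - y)^2))
      = Real.pi * sg^2 := by
    rw [MeasureTheory.Measure.volume_eq_prod]
    rw [show (∫ w : ℝ × ℝ, Real.exp (-(1/sg^2) * (w.1 - x)^2) *
          Real.exp (-(1/sg^2) * (w.2 - y)^2) ∂((volume : Measure ℝ).prod volume))
        = (∫ t : ℝ, Real.exp (-(1/sg^2) * (t - x)^2)) * ∫ t : ℝ, Real.exp (-(1/sg^2) * (t - y)^2)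
        from MeasureTheory.integral_prod_mul (fun t : ℝ => Real.exp (-(1/sg^2) * (t - x)^2))
          (fun t : ℝ => Real.exp (-(1/sg^2) * (t - y)^2))]
    rw [integral_gauss_shift sg x hsg, integral_gauss_shift sg y hsg,
        Real.mul_self_sqrt (by positivity)]
  have iB : (∫ w : ℝ × ℝ, Real.exp (-(1/sg^2) * (w.1 - 0)^2) * Real.exp (-(1/sg^2) * (w.2 - 0)^2))
      = Real.pi * sg^2 := by
    rw [MeasureTheory.Measure.volume_eq_prod]
    rw [show (∫ w : ℝ × ℝ, Real.exp (-(1/sg^2) * (w.1 - 0)^2) *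
          Real.exp (-(1/sg^2) * (w.2 - 0)^2) ∂((volume : Measure ℝ).prod volume))
        = (∫ t : ℝ, Real.exp (-(1/sg^2) * (t - 0)^2)) * ∫ t : ℝ, Real.exp (-(1/sg^2) * (t - 0)^2)
        from MeasureTheory.integral_prod_mul (fun t : ℝ => Real.exp (-(1/sg^2) * (t - 0)^2))
          (fun t : ℝ => Real.exp (-(1/sg^2) * (t - 0)^2))]
    rw [integral_gauss_shift sg 0 hsg, Real.mul_self_sqrt (by positivity)]
  have hπσ : ((Real.pi : ℂ) / -((-(1/sg^2) : ℝ) : ℂ)) = ((Real.pi * sg^2 : ℝ) : ℂ) := by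
    have : sg ≠ 0 := hsg.ne'
    push_cast
    field_simp
  have hne : ((Real.pi * sg^2 : ℝ) : ℂ) ≠ 0 :=
    Complex.ofReal_ne_zero.mpr (by positivity)
  have iC : (∫ w : ℝ × ℝ, Complex.exp (((-(1/sg^2) : ℝ) : ℂ) * w.1^2 + cu * w.1 + du) *
        Complex.exp (((-(1/sg^2) : ℝ) : ℂ) * w.2^2 + cv * w.2 + dv))
      = ((Real.pi * sg^2 : ℝ) : ℂ) *
          Complex.exp (((-((x^2+y^2)/(4*sg^2)) - 2*sg^2*Real.pi^2*(1-Real.cos θ)/lam^2 : ℝ) : ℂ) +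
            ((-(Real.pi*(x*(1+Real.cos θ) + y*Real.sin θ)/lam) : ℝ) : ℂ) * Complex.I) := by
    rw [MeasureTheory.Measure.volume_eq_prod]
    rw [show (∫ w : ℝ × ℝ, Complex.exp (((-(1/sg^2) : ℝ) : ℂ) * w.1^2 + cu * w.1 + du) *
          Complex.exp (((-(1/sg^2) : ℝ) : ℂ) * w.2^2 + cv * w.2 + dv) ∂((volume : Measure ℝ).prod volume))
        = (∫ t : ℝ, Complex.exp (((-(1/sg^2) : ℝ) : ℂ) * t^2 + cu * t + du)) *
          ∫ t : ℝ, Complex.exp (((-(1/sg^2) : ℝ) : ℂ) * t^2 + cv * t + dv)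
        from MeasureTheory.integral_prod_mul
          (fun t : ℝ => Complex.exp (((-(1/sg^2) : ℝ) : ℂ) * t^2 + cu * t + du))
          (fun t : ℝ => Complex.exp (((-(1/sg^2) : ℝ) : ℂ) * t^2 + cv * t + dv))]
    rw [integral_cexp_quadratic hb cu du, integral_cexp_quadratic hb cv dv, hπσ,
        mul_mul_mul_comm, ← Complex.cpow_add _ _ hne]
    rw [show ((1:ℂ)/2 + 1/2 : ℂ) = 1 by norm_num, Complex.cpow_one, ← Complex.exp_add]
    congr 1
    rw [hdu, hcu, quad_exponent sg hsg, hdv, hcv, quad_exponent sg hsg]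
    have hcomb : ∀ (a b c d : ℝ), ((a:ℂ) + (b:ℂ)*Complex.I) + ((c:ℂ) + (d:ℂ)*Complex.I)
        = ((a+c : ℝ) : ℂ) + ((b+d : ℝ):ℂ) * Complex.I := by intros; push_cast; ring
    rw [hcomb]
    congr 1
    apply ofReal_add_mul_I_congr
    · have hs2 : Real.sin θ ^ 2 = 1 - Real.cos θ ^ 2 := by
        have := Real.sin_sq_add_cos_sq θ; linarith
      field_simp
      ring_nf
      rw [hs2]
      ring
    · field_simp
      ring
  rw [iA, iB, iC]
  have hre : (((Real.pi * sg^2 : ℝ) : ℂ) *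
      Complex.exp (((-((x^2+y^2)/(4*sg^2)) - 2*sg^2*Real.pi^2*(1-Real.cos θ)/lam^2 : ℝ) : ℂ) +
        ((-(Real.pi*(x*(1+Real.cos θ) + y*Real.sin θ)/lam) : ℝ) : ℂ) * Complex.I)).re
      = Real.pi * sg^2 *
        (Real.exp (-((x^2+y^2)/(4*sg^2)) - 2*sg^2*Real.pi^2*(1-Real.cos θ)/lam^2) *
          Real.cos (-(Real.pi*(x*(1+Real.cos θ) + y*Real.sin θ)/lam))) := by
    rw [Complex.re_ofReal_mul, Complex.exp_re]
    simp only [Complex.add_re, Complex.add_im, Complex.mul_re, Complex.mul_im,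
      Complex.I_re, Complex.I_im, Complex.ofReal_re, Complex.ofReal_im]
    norm_num
  rw [hre]
  ring

lemma exp_littleo : (fun t : ℝ => Real.exp t - 1 - t) =o[nhds 0] (fun t : ℝ => t) := by
  have h := Real.hasDerivAt_exp 0
  rw [hasDerivAt_iff_isLittleO] at h
  simpa using h

lemma sin_littleo : (fun t : ℝ => Real.sin t - t) =o[nhds 0] (fun t : ℝ => t) := by
  have h := Real.hasDerivAt_sin 0
  rw [hasDerivAt_iff_isLittleO] at h
  simpa using h

lemma cos_littleo : (fun t : ℝ => 1 - Real.cos t - t^2/2) =o[nhds 0] (fun t : ℝ => t^2) := by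
  have hhalf : Filter.Tendsto (fun t : ℝ => t/2) (nhds 0) (nhds 0) := by
    simpa using (continuous_id.div_const (2:ℝ)).tendsto 0
  have h1 : (fun t : ℝ => Real.sin (t/2) - t/2) =o[nhds 0] (fun t : ℝ => t/2) := by
    have := sin_littleo.comp_tendsto hhalf
    simpa [Function.comp_def] using this
  have h2 : (fun t : ℝ => Real.sin (t/2) + t/2) =O[nhds 0] (fun t : ℝ => t) := by
    apply Asymptotics.IsBigO.of_bound 1
    filter_upwards with t
    rw [one_mul, Real.norm_eq_abs, Real.norm_eq_abs]
    have hs := Real.abs_sin_le_abs (x := t/2)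
    have habs : |t/2| = |t|/2 := by rw [abs_div]; norm_num
    calc |Real.sin (t/2) + t/2| ≤ |Real.sin (t/2)| + |t/2| := abs_add_le _ _
      _ ≤ |t| := by rw [habs] at hs ⊢; linarith
  have h3 := h1.mul_isBigO h2
  have h4 : (fun t : ℝ => (Real.sin (t/2) - t/2) * (Real.sin (t/2) + t/2)) =o[nhds 0]
      (fun t : ℝ => t^2) := by
    apply h3.trans_isBigO
    apply Asymptotics.IsBigO.of_bound 1
    filter_upwards with t
    rw [one_mul, Real.norm_eq_abs, Real.norm_eq_abs]
    have ht : t/2 * t = t^2/2 := by ring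
    rw [ht, _root_.abs_of_nonneg (by positivity : (0:ℝ) ≤ t^2/2),
      _root_.abs_of_nonneg (sq_nonneg t)]
    linarith [sq_nonneg t]
  have h5 := h4.const_mul_left 2
  apply h5.congr' _ Filter.EventuallyEq.rfl
  filter_upwards with t
  have hh := Real.cos_two_mul' (t/2)
  rw [show 2*(t/2) = t by ring] at hh
  nlinarith [hh, Real.sin_sq_add_cos_sq (t/2)]

noncomputable def Nf (p : ℝ × ℝ × ℝ) : ℝ := p.1^2 + p.2.1^2 + p.2.2^2

noncomputable def Ef (lam sg : ℝ) (p : ℝ × ℝ × ℝ) : ℝ :=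
  -((p.1^2 + p.2.1^2)/(4*sg^2)) - 2*sg^2*Real.pi^2*(1 - Real.cos p.2.2)/lam^2

noncomputable def Pf (lam : ℝ) (p : ℝ × ℝ × ℝ) : ℝ :=
  -(Real.pi*(p.1*(1 + Real.cos p.2.2) + p.2.1*Real.sin p.2.2)/lam)

lemma Ef_cont (lam sg : ℝ) : Continuous (Ef lam sg) := by
  unfold Ef
  fun_prop

lemma Pf_cont (lam : ℝ) : Continuous (Pf lam) := by
  unfold Pf
  fun_prop

lemma Ef_tendsto (lam sg : ℝ) : Filter.Tendsto (Ef lam sg) (nhds 0) (nhds 0) := by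
  have h := (Ef_cont lam sg).tendsto 0
  have h0 : Ef lam sg 0 = 0 := by simp [Ef]
  rwa [h0] at h

lemma Pf_tendsto (lam : ℝ) : Filter.Tendsto (Pf lam) (nhds 0) (nhds 0) := by
  have h := (Pf_cont lam).tendsto 0
  have h0 : Pf lam 0 = 0 := by simp [Pf]
  rwa [h0] at h

lemma theta_tendsto : Filter.Tendsto (fun p : ℝ × ℝ × ℝ => p.2.2) (nhds 0) (nhds 0) := by
  have := (continuous_snd.comp continuous_snd).tendsto (0 : ℝ × ℝ × ℝ)
  simpa [Function.comp_def] using this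

lemma one_sub_cos_bounds (t : ℝ) : 0 ≤ 1 - Real.cos t ∧ 1 - Real.cos t ≤ t^2/2 := by
  constructor
  · nlinarith [Real.cos_le_one t]
  · nlinarith [Real.one_sub_sq_div_two_le_cos (x := t)]

lemma Nf_nonneg (p : ℝ × ℝ × ℝ) : 0 ≤ Nf p := by unfold Nf; positivity

lemma Ef_isBigO (lam sg : ℝ) (hlam : 0 < lam) (hsg : 0 < sg) :
    Ef lam sg =O[nhds 0] Nf := by
  apply Asymptotics.IsBigO.of_bound (1/(4*sg^2) + sg^2*Real.pi^2/lam^2)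
  filter_upwards with p
  rw [Real.norm_eq_abs, Real.norm_eq_abs, _root_.abs_of_nonneg (Nf_nonneg p)]
  obtain ⟨h1, h2⟩ := one_sub_cos_bounds p.2.2
  have hs2 : 0 < sg^2 := by positivity
  have hl2 : 0 < lam^2 := by positivity
  have hp2 : 0 < Real.pi^2 := by positivity
  have hb : 2*sg^2*Real.pi^2*(1 - Real.cos p.2.2)/lam^2 ≤ 2*sg^2*Real.pi^2*(p.2.2^2/2)/lam^2 := by
    gcongr
  have hEneg : Ef lam sg p =
      -((p.1^2+p.2.1^2)/(4*sg^2) + 2*sg^2*Real.pi^2*(1-Real.cos p.2.2)/lam^2) := by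
    unfold Ef; ring
  have c1 : (p.1^2+p.2.1^2)/(4*sg^2) ≤ Nf p/(4*sg^2) := by
    gcongr
    unfold Nf
    nlinarith [sq_nonneg p.2.2]
  have c3 : 2*sg^2*Real.pi^2*(p.2.2^2/2)/lam^2 ≤ 2*sg^2*Real.pi^2*(Nf p/2)/lam^2 := by
    gcongr
    unfold Nf
    nlinarith [sq_nonneg p.1, sq_nonneg p.2.1]
  have c4 : Nf p/(4*sg^2) + 2*sg^2*Real.pi^2*(Nf p/2)/lam^2
      = (1/(4*sg^2) + sg^2*Real.pi^2/lam^2) * Nf p := by ring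
  have hS : 0 ≤ (p.1^2+p.2.1^2)/(4*sg^2) + 2*sg^2*Real.pi^2*(1-Real.cos p.2.2)/lam^2 :=
    add_nonneg (by positivity) (div_nonneg (mul_nonneg (by positivity) h1) (by positivity))
  have hCN : 0 ≤ (1/(4*sg^2) + sg^2*Real.pi^2/lam^2) * Nf p :=
    mul_nonneg (by positivity) (Nf_nonneg p)
  rw [abs_le, hEneg]
  constructor
  · linarith
  · linarith

lemma Pf_sq_isBigO (lam : ℝ) (hlam : 0 < lam) :
    (fun p => Pf lam p ^ 2) =O[nhds 0] Nf := by
  apply Asymptotics.IsBigO.of_bound (8*Real.pi^2/lam^2)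
  filter_upwards with p
  rw [Real.norm_eq_abs, Real.norm_eq_abs, _root_.abs_of_nonneg (Nf_nonneg p),
    _root_.abs_of_nonneg (sq_nonneg _)]
  have hb : (p.1*(1 + Real.cos p.2.2) + p.2.1*Real.sin p.2.2)^2 ≤ 8 * Nf p := by
    unfold Nf
    have hc1 : 0 ≤ (1 - Real.cos p.2.2)*(3 + Real.cos p.2.2)*p.1^2 :=
      mul_nonneg (mul_nonneg (by linarith [Real.cos_le_one p.2.2])
        (by linarith [Real.neg_one_le_cos p.2.2])) (sq_nonneg _)
    have hc2 : 0 ≤ (1 - Real.sin p.2.2^2) * p.2.1^2 :=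
      mul_nonneg (by nlinarith [Real.sin_sq_le_one p.2.2]) (sq_nonneg _)
    nlinarith [sq_nonneg (p.1*(1 + Real.cos p.2.2) - p.2.1*Real.sin p.2.2), hc1, hc2,
      sq_nonneg p.1, sq_nonneg p.2.1, sq_nonneg p.2.2]
  have he : Pf lam p ^ 2 = Real.pi^2 * (p.1*(1 + Real.cos p.2.2) + p.2.1*Real.sin p.2.2)^2 / lam^2 := by
    unfold Pf; ring
  rw [he]
  calc Real.pi^2 * (p.1*(1 + Real.cos p.2.2) + p.2.1*Real.sin p.2.2)^2 / lam^2
      ≤ Real.pi^2 * (8 * Nf p) / lam^2 := by gcongr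
    _ = 8*Real.pi^2/lam^2 * Nf p := by ring

lemma theta_sq_isBigO : (fun p : ℝ × ℝ × ℝ => p.2.2^2) =O[nhds 0] Nf := by
  apply Asymptotics.IsBigO.of_bound 1
  filter_upwards with p
  rw [Real.norm_eq_abs, Real.norm_eq_abs, _root_.abs_of_nonneg (Nf_nonneg p),
    _root_.abs_of_nonneg (sq_nonneg _), one_mul]
  unfold Nf
  nlinarith [sq_nonneg p.1, sq_nonneg p.2.1]

/-- Second-order expansion of the squared cortical distance at the origin:
`d²((x,y,θ),(0,0,0)) = 2σ²π·[(1/(4σ²)+2π²/λ²)x² + (1/(4σ²))y² + (σ²π²/λ²)θ²]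
  + o(x²+y²+θ²)` as `(x,y,θ) → (0,0,0)`. -/
theorem statement9 (lam sg : ℝ) (hlam : 0 < lam) (hsg : 0 < sg) :
    (fun p : ℝ × ℝ × ℝ =>
        cdist lam sg p (0, 0, 0) ^ 2 -
          2 * sg ^ 2 * Real.pi *
            ((1 / (4 * sg ^ 2) + 2 * Real.pi ^ 2 / lam ^ 2) * p.1 ^ 2 +
              1 / (4 * sg ^ 2) * p.2.1 ^ 2 +
              sg ^ 2 * Real.pi ^ 2 / lam ^ 2 * p.2.2 ^ 2))
      =o[nhds (0 : ℝ × ℝ × ℝ)]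
      (fun p : ℝ × ℝ × ℝ => p.1 ^ 2 + p.2.1 ^ 2 + p.2.2 ^ 2) := by
  have hE0 := Ef_tendsto lam sg
  have hP0 := Pf_tendsto lam
  have hEO := Ef_isBigO lam sg hlam hsg
  have hPsqO := Pf_sq_isBigO lam hlam
  -- piece 1
  have P1 : (fun p => -(Real.exp (Ef lam sg p) - 1 - Ef lam sg p)) =o[nhds 0] Nf := by
    have h := (exp_littleo.comp_tendsto hE0).trans_isBigO hEO
    simp only [Function.comp_def] at h
    exact h.neg_left
  -- piece 2
  have P2 : (fun p : ℝ × ℝ × ℝ =>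
      (2*sg^2*Real.pi^2/lam^2) * (1 - Real.cos p.2.2 - p.2.2^2/2)) =o[nhds 0] Nf := by
    have h := (cos_littleo.comp_tendsto theta_tendsto).trans_isBigO theta_sq_isBigO
    simp only [Function.comp_def] at h
    exact h.const_mul_left _
  -- piece 3a
  have P3a : (fun p => (Real.exp (Ef lam sg p) - 1) * (1 - Real.cos (Pf lam p)))
      =o[nhds 0] Nf := by
    have hA : (fun p => Real.exp (Ef lam sg p) - 1) =o[nhds 0] (fun _ : ℝ × ℝ × ℝ => (1:ℝ)) := by
      rw [Asymptotics.isLittleO_one_iff]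
      have h := (Real.continuous_exp.tendsto 0).comp hE0
      simp only [Function.comp_def, Real.exp_zero] at h
      simpa using h.sub (tendsto_const_nhds (x := (1:ℝ)))
    have hB : (fun p => 1 - Real.cos (Pf lam p)) =O[nhds 0] Nf := by
      refine (Asymptotics.IsBigO.of_bound (1/2) ?_).trans hPsqO
      filter_upwards with p
      rw [Real.norm_eq_abs, Real.norm_eq_abs, _root_.abs_of_nonneg (one_sub_cos_bounds (Pf lam p)).1,
        _root_.abs_of_nonneg (sq_nonneg _)]
      have := (one_sub_cos_bounds (Pf lam p)).2
      linarith
    have h := hA.mul_isBigO hB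
    simp only [one_mul] at h
    exact h
  -- piece 3b
  have P3b : (fun p => 1 - Real.cos (Pf lam p) - Pf lam p^2/2) =o[nhds 0] Nf := by
    have h := (cos_littleo.comp_tendsto hP0).trans_isBigO hPsqO
    simpa only [Function.comp_def] using h
  -- piece 3c
  have hx1 : ∀ᶠ p : ℝ × ℝ × ℝ in nhds 0, |p.1| ≤ 1 := by
    have hf : Filter.Tendsto (fun p : ℝ × ℝ × ℝ => p.1) (nhds 0) (nhds 0) := by
      simpa using continuous_fst.tendsto (0 : ℝ × ℝ × ℝ)
    have h1 : ∀ᶠ t : ℝ in nhds 0, |t| ≤ 1 := by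
      filter_upwards [Icc_mem_nhds (by norm_num : (-1:ℝ) < 0) (by norm_num : (0:ℝ) < 1)] with t ht
      exact abs_le.mpr ⟨ht.1, ht.2⟩
    exact hf.eventually h1
  have hA3 : (fun p : ℝ × ℝ × ℝ => Pf lam p + 2*Real.pi*p.1/lam) =O[nhds 0] Nf := by
    apply Asymptotics.IsBigO.of_bound (Real.pi/lam)
    filter_upwards [hx1] with p hp
    rw [Real.norm_eq_abs, Real.norm_eq_abs, _root_.abs_of_nonneg (Nf_nonneg p)]
    have hid : Pf lam p + 2*Real.pi*p.1/lam
        = Real.pi * (p.1*(1 - Real.cos p.2.2) - p.2.1*Real.sin p.2.2) / lam := by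
      unfold Pf; ring
    rw [hid, abs_div, abs_mul, _root_.abs_of_pos Real.pi_pos, _root_.abs_of_pos hlam]
    obtain ⟨hc0, hc2⟩ := one_sub_cos_bounds p.2.2
    have hsin := Real.abs_sin_le_abs (x := p.2.2)
    have hb1 : |p.1*(1 - Real.cos p.2.2) - p.2.1*Real.sin p.2.2| ≤ Nf p := by
      have t1 : |p.1*(1 - Real.cos p.2.2)| ≤ p.2.2^2/2 := by
        rw [abs_mul, _root_.abs_of_nonneg hc0]
        calc |p.1| * (1 - Real.cos p.2.2) ≤ 1 * (p.2.2^2/2) :=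
          mul_le_mul hp hc2 hc0 zero_le_one
        _ = p.2.2^2/2 := one_mul _
      have t2 : |p.2.1*Real.sin p.2.2| ≤ (p.2.1^2 + p.2.2^2)/2 := by
        rw [abs_mul]
        calc |p.2.1| * |Real.sin p.2.2| ≤ |p.2.1| * |p.2.2| :=
          mul_le_mul_of_nonneg_left hsin (abs_nonneg _)
        _ ≤ (p.2.1^2 + p.2.2^2)/2 := by
            nlinarith [sq_nonneg (|p.2.1| - |p.2.2|), _root_.sq_abs p.2.1, _root_.sq_abs p.2.2]
      calc |p.1*(1 - Real.cos p.2.2) - p.2.1*Real.sin p.2.2|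
          ≤ |p.1*(1 - Real.cos p.2.2)| + |p.2.1*Real.sin p.2.2| := abs_sub _ _
        _ ≤ Nf p := by unfold Nf; nlinarith [t1, t2, sq_nonneg p.1, sq_nonneg p.2.2]
    calc Real.pi * |p.1*(1 - Real.cos p.2.2) - p.2.1*Real.sin p.2.2| / lam
        ≤ Real.pi * Nf p / lam := by gcongr
      _ = Real.pi/lam * Nf p := by ring
  have hB3 : (fun p : ℝ × ℝ × ℝ => Pf lam p - 2*Real.pi*p.1/lam) =o[nhds 0]
      (fun _ : ℝ × ℝ × ℝ => (1:ℝ)) := by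
    rw [Asymptotics.isLittleO_one_iff]
    have hc : Filter.Tendsto (fun p : ℝ × ℝ × ℝ => 2*Real.pi*p.1/lam) (nhds 0) (nhds 0) := by
      have : Continuous (fun p : ℝ × ℝ × ℝ => 2*Real.pi*p.1/lam) := by fun_prop
      simpa using this.tendsto 0
    simpa using hP0.sub hc
  have P3c : (fun p : ℝ × ℝ × ℝ =>
      (1/2) * ((Pf lam p + 2*Real.pi*p.1/lam) * (Pf lam p - 2*Real.pi*p.1/lam)))
      =o[nhds 0] Nf := by
    have h := hA3.mul_isLittleO hB3
    simp only [mul_one] at h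
    exact h.const_mul_left _
  -- assemble
  have S := ((((P1.add P2).add P3a).add P3b).add P3c).const_mul_left (2*Real.pi*sg^2)
  apply S.congr' _ (Filter.EventuallyEq.rfl)
  filter_upwards with p
  obtain ⟨x, y, θ⟩ := p
  simp only [Ef, Pf]
  rw [cdist_sq_eq lam sg hlam hsg x y θ]
  ring
end

section
/- Let X be a measurable space, μ and μ' two measures on X, d, d' : X × X → ℝ two functions, and constants s > 0, κ ≥ 1, M ≥ 1. For r > 0 write B_r(x) = {y : d(x,y) < r} and B'_r(x) = {y : d'(x,y) < r}, assume all such balls are measurable, assume x ↦ μ(B_r(x)) and x ↦ μ'(B'_r(x)) are measurable, and define the weighted measures μ_r(A) = ∫_A μ(B_r(x))^{−1/2} dμ(x) and μ'_r(A) = ∫_A μ'(B'_r(x))^{−1/2} dμ'(x). Assume: (i) κ^{−s}·μ(A) ≤ μ'(A) ≤ κ^{s}·μ(A) for every measurable A ⊆ X; (ii) κ^{−1}·d(x,y) ≤ d'(x,y) ≤ κ·d(x,y) for all x,y ∈ X; (iii) μ(B_{κr}(x)) ≤ M·μ(B_r(x)) for all x ∈ X and r > 0. Then for every measurable A ⊆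 X and every r > 0: (κ^{3s/2}M)^{−1}·μ_r(A) ≤ μ'_r(A) ≤ κ^{3s/2}M·μ_r(A). -/
open MeasureTheory

open ENNReal
private lemma aux_rpow {a b C : ℝ≥0∞} (hC0 : C ≠ 0) (hCt : C ≠ ⊤) (h : a ≤ C * b) :
    b ^ (-(1:ℝ)/2) ≤ C ^ ((1:ℝ)/2) * a ^ (-(1:ℝ)/2) := by
  have h2 : a ^ ((1:ℝ)/2) ≤ C ^ ((1:ℝ)/2) * b ^ ((1:ℝ)/2) := by
    calc a ^ ((1:ℝ)/2) ≤ (C * b) ^ ((1:ℝ)/2) := ENNReal.rpow_le_rpow h (by norm_num)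
    _ = C ^ ((1:ℝ)/2) * b ^ ((1:ℝ)/2) := ENNReal.mul_rpow_of_nonneg _ _ (by norm_num)
  have hC0' : C ^ ((1:ℝ)/2) ≠ 0 := by
    simp [ENNReal.rpow_eq_zero_iff, hC0, hCt]
  have hCt' : C ^ ((1:ℝ)/2) ≠ ⊤ := by
    simp [ENNReal.rpow_eq_top_iff, hC0, hCt]
  have h3 := ENNReal.inv_le_inv.mpr h2
  rw [ENNReal.mul_inv (Or.inl hC0') (Or.inl hCt')] at h3
  rw [show (-(1:ℝ)/2) = -((1:ℝ)/2) by ring, ENNReal.rpow_neg, ENNReal.rpow_neg]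
  calc (b ^ ((1:ℝ)/2))⁻¹ = C ^ ((1:ℝ)/2) * ((C ^ ((1:ℝ)/2))⁻¹ * (b ^ ((1:ℝ)/2))⁻¹) := by
        rw [← mul_assoc, ENNReal.mul_inv_cancel hC0' hCt', one_mul]
  _ ≤ C ^ ((1:ℝ)/2) * (a ^ ((1:ℝ)/2))⁻¹ := mul_le_mul_right h3 _

/-- If `μ` and `μ'` are comparable measures (`κ^{−s}μ ≤ μ' ≤ κ^{s}μ`), `d` and `d'`
are comparable distance functions (`κ⁻¹d ≤ d' ≤ κd`), and `μ` satisfies the doubling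
property `μ(B_{κr}(x)) ≤ M·μ(B_r(x))`, then the weighted measures
`μ_r(A) = ∫_A μ(B_r(x))^{−1/2} dμ(x)` and `μ'_r(A) = ∫_A μ'(B'_r(x))^{−1/2} dμ'(x)`
are comparable: `(κ^{3s/2}M)⁻¹·μ_r(A) ≤ μ'_r(A) ≤ κ^{3s/2}M·μ_r(A)`. -/
theorem statement15 {X : Type*} [MeasurableSpace X] (μ μ' : Measure X)
    (d d' : X → X → ℝ) (s κ M : ℝ) (hs : 0 < s) (hκ : 1 ≤ κ) (hM : 1 ≤ M)
    (hB : ∀ (x : X) (r : ℝ), MeasurableSet {y | d x y < r})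
    (hB' : ∀ (x : X) (r : ℝ), MeasurableSet {y | d' x y < r})
    (hmeas : ∀ r : ℝ, Measurable fun x => μ {y | d x y < r})
    (hmeas' : ∀ r : ℝ, Measurable fun x => μ' {y | d' x y < r})
    (hμ₁ : ∀ A : Set X, MeasurableSet A → ENNReal.ofReal (κ ^ (-s)) * μ A ≤ μ' A)
    (hμ₂ : ∀ A : Set X, MeasurableSet A → μ' A ≤ ENNReal.ofReal (κ ^ s) * μ A)
    (hd₁ : ∀ x y : X, κ⁻¹ * d x y ≤ d' x y)
    (hd₂ : ∀ x y : X, d' x y ≤ κ * d x y)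
    (hdbl : ∀ x : X, ∀ r > (0 : ℝ),
      μ {y | d x y < κ * r} ≤ ENNReal.ofReal M * μ {y | d x y < r}) :
    ∀ A : Set X, MeasurableSet A → ∀ r > (0 : ℝ),
      (ENNReal.ofReal (κ ^ (3 * s / 2) * M))⁻¹ *
          ∫⁻ x in A, (μ {y | d x y < r}) ^ (-(1 : ℝ) / 2) ∂μ ≤
        ∫⁻ x in A, (μ' {y | d' x y < r}) ^ (-(1 : ℝ) / 2) ∂μ' ∧
      ∫⁻ x in A, (μ' {y | d' x y < r}) ^ (-(1 : ℝ) / 2) ∂μ' ≤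
        ENNReal.ofReal (κ ^ (3 * s / 2) * M) *
          ∫⁻ x in A, (μ {y | d x y < r}) ^ (-(1 : ℝ) / 2) ∂μ := by
  intro A hA r hr
  have hκ0 : (0:ℝ) < κ := lt_of_lt_of_le one_pos hκ
  have hM0 : (0:ℝ) < M := lt_of_lt_of_le one_pos hM
  have hκs : (0:ℝ) < κ ^ s := Real.rpow_pos_of_pos hκ0 s
  -- the constant C = κ^s * M
  set C : ℝ≥0∞ := ENNReal.ofReal (κ ^ s * M) with hC
  have hC0 : C ≠ 0 := by
    simp [hC, ENNReal.ofReal_eq_zero, not_le, mul_pos hκs hM0]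
  have hCt : C ≠ ⊤ := ENNReal.ofReal_ne_top
  have hone : ENNReal.ofReal (κ ^ s) * ENNReal.ofReal (κ ^ (-s)) = 1 := by
    rw [← ENNReal.ofReal_mul hκs.le, ← Real.rpow_add hκ0]
    simp
  -- pointwise bounds
  have hab : ∀ x, μ {y | d x y < r} ≤ C * μ' {y | d' x y < r} := by
    intro x
    have hsub : {y | d x y < r / κ} ⊆ {y | d' x y < r} := by
      intro y hy
      calc d' x y ≤ κ * d x y := hd₂ x y
      _ < κ * (r / κ) := by
            exact mul_lt_mul_of_pos_left hy hκ0
      _ = r := by field_simp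
    have h1 : μ {y | d x y < r} ≤ ENNReal.ofReal M * μ {y | d x y < r / κ} := by
      have := hdbl x (r / κ) (div_pos hr hκ0)
      rwa [show κ * (r / κ) = r by field_simp] at this
    have h2 : μ {y | d x y < r / κ} ≤ ENNReal.ofReal (κ ^ s) * μ' {y | d' x y < r} := by
      have h3 := hμ₁ {y | d x y < r / κ} (hB x (r / κ))
      calc μ {y | d x y < r / κ}
          = ENNReal.ofReal (κ ^ s) * (ENNReal.ofReal (κ ^ (-s)) * μ {y | d x y < r / κ}) := by
            rw [← mul_assoc, hone, one_mul]
      _ ≤ ENNReal.ofReal (κ ^ s) * μ' {y | d x y < r / κ} := mul_le_mul_right h3 _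
      _ ≤ ENNReal.ofReal (κ ^ s) * μ' {y | d' x y < r} := mul_le_mul_right (measure_mono hsub) _
    calc μ {y | d x y < r} ≤ ENNReal.ofReal M * (ENNReal.ofReal (κ ^ s) * μ' {y | d' x y < r}) :=
          le_trans h1 (mul_le_mul_right h2 _)
    _ = C * μ' {y | d' x y < r} := by
          rw [hC, ENNReal.ofReal_mul hκs.le, ← mul_assoc, mul_comm (ENNReal.ofReal M)]
  have hba : ∀ x, μ' {y | d' x y < r} ≤ C * μ {y | d x y < r} := by
    intro x
    have hsub : {y | d' x y < r} ⊆ {y | d x y < κ * r} := by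
      intro y hy
      have h1 := hd₁ x y
      have : κ⁻¹ * d x y < r := lt_of_le_of_lt h1 hy
      calc d x y = κ * (κ⁻¹ * d x y) := by field_simp
      _ < κ * r := mul_lt_mul_of_pos_left this hκ0
    calc μ' {y | d' x y < r} ≤ ENNReal.ofReal (κ ^ s) * μ {y | d' x y < r} :=
          hμ₂ _ (hB' x r)
    _ ≤ ENNReal.ofReal (κ ^ s) * μ {y | d x y < κ * r} := mul_le_mul_right (measure_mono hsub) _
    _ ≤ ENNReal.ofReal (κ ^ s) * (ENNReal.ofReal M * μ {y | d x y < r}) :=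
          mul_le_mul_right (hdbl x r hr) _
    _ = C * μ {y | d x y < r} := by
          rw [hC, ENNReal.ofReal_mul hκs.le, mul_assoc]
  -- measure comparisons
  have hμle : μ'.restrict A ≤ (ENNReal.ofReal (κ ^ s) • μ).restrict A := by
    refine Measure.restrict_mono le_rfl (Measure.le_iff.mpr fun B hB'' => ?_)
    simpa using hμ₂ B hB''
  have hμle' : μ.restrict A ≤ (ENNReal.ofReal (κ ^ s) • μ').restrict A := by
    refine Measure.restrict_mono le_rfl (Measure.le_iff.mpr fun B hB'' => ?_)
    have h3 := hμ₁ B hB''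
    calc μ B = ENNReal.ofReal (κ ^ s) * (ENNReal.ofReal (κ ^ (-s)) * μ B) := by
          rw [← mul_assoc, hone, one_mul]
    _ ≤ ENNReal.ofReal (κ ^ s) * μ' B := mul_le_mul_right h3 _
    _ = ((ENNReal.ofReal (κ ^ s)) • μ') B := by simp
  -- key integral bounds
  have key₂ : ∫⁻ x in A, (μ' {y | d' x y < r}) ^ (-(1 : ℝ) / 2) ∂μ' ≤
      (ENNReal.ofReal (κ ^ s) * C ^ ((1:ℝ)/2)) *
        ∫⁻ x in A, (μ {y | d x y < r}) ^ (-(1 : ℝ) / 2) ∂μ := by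
    calc ∫⁻ x in A, (μ' {y | d' x y < r}) ^ (-(1 : ℝ) / 2) ∂μ'
        ≤ ∫⁻ x in A, C ^ ((1:ℝ)/2) * (μ {y | d x y < r}) ^ (-(1 : ℝ) / 2) ∂μ' :=
          lintegral_mono fun x => aux_rpow hC0 hCt (hab x)
    _ ≤ ∫⁻ x in A, C ^ ((1:ℝ)/2) * (μ {y | d x y < r}) ^ (-(1 : ℝ) / 2)
          ∂(ENNReal.ofReal (κ ^ s) • μ) := lintegral_mono' hμle le_rfl
    _ = ENNReal.ofReal (κ ^ s) * (C ^ ((1:ℝ)/2) *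
          ∫⁻ x in A, (μ {y | d x y < r}) ^ (-(1 : ℝ) / 2) ∂μ) := by
        rw [Measure.restrict_smul, lintegral_smul_measure,
          lintegral_const_mul' _ _ (by simpa [ENNReal.rpow_eq_top_iff, hC0, hCt] : C ^ ((1:ℝ)/2) ≠ ⊤), smul_eq_mul]
    _ = _ := by ring
  have key₁ : ∫⁻ x in A, (μ {y | d x y < r}) ^ (-(1 : ℝ) / 2) ∂μ ≤
      (ENNReal.ofReal (κ ^ s) * C ^ ((1:ℝ)/2)) *
        ∫⁻ x in A, (μ' {y | d' x y < r}) ^ (-(1 : ℝ) / 2) ∂μ' := by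
    calc ∫⁻ x in A, (μ {y | d x y < r}) ^ (-(1 : ℝ) / 2) ∂μ
        ≤ ∫⁻ x in A, C ^ ((1:ℝ)/2) * (μ' {y | d' x y < r}) ^ (-(1 : ℝ) / 2) ∂μ :=
          lintegral_mono fun x => aux_rpow hC0 hCt (hba x)
    _ ≤ ∫⁻ x in A, C ^ ((1:ℝ)/2) * (μ' {y | d' x y < r}) ^ (-(1 : ℝ) / 2)
          ∂(ENNReal.ofReal (κ ^ s) • μ') := lintegral_mono' hμle' le_rfl
    _ = ENNReal.ofReal (κ ^ s) * (C ^ ((1:ℝ)/2) *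
          ∫⁻ x in A, (μ' {y | d' x y < r}) ^ (-(1 : ℝ) / 2) ∂μ') := by
        rw [Measure.restrict_smul, lintegral_smul_measure,
          lintegral_const_mul' _ _ (by simpa [ENNReal.rpow_eq_top_iff, hC0, hCt] : C ^ ((1:ℝ)/2) ≠ ⊤), smul_eq_mul]
    _ = _ := by ring
  -- constants comparison
  have hconst : ENNReal.ofReal (κ ^ s) * C ^ ((1:ℝ)/2) ≤ ENNReal.ofReal (κ ^ (3 * s / 2) * M) := by
    have hCpow : C ^ ((1:ℝ)/2) = ENNReal.ofReal ((κ ^ s * M) ^ ((1:ℝ)/2)) := by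
      rw [hC, ← ENNReal.ofReal_rpow_of_pos (mul_pos hκs hM0)]
    rw [hCpow, ← ENNReal.ofReal_mul hκs.le]
    apply ENNReal.ofReal_le_ofReal
    have hmulp : (κ ^ s * M) ^ ((1:ℝ)/2) = κ ^ (s/2) * M ^ ((1:ℝ)/2) := by
      rw [Real.mul_rpow hκs.le hM0.le, ← Real.rpow_mul hκ0.le]
      ring_nf
    rw [hmulp, ← mul_assoc, ← Real.rpow_add hκ0, show s + s/2 = 3*s/2 by ring]
    have hMle : M ^ ((1:ℝ)/2) ≤ M := by
      have := Real.rpow_le_rpow_of_exponent_le hM (by norm_num : (1:ℝ)/2 ≤ 1)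
      rwa [Real.rpow_one] at this
    exact mul_le_mul_of_nonneg_left hMle (Real.rpow_pos_of_pos hκ0 _).le
  have hK0 : ENNReal.ofReal (κ ^ (3 * s / 2) * M) ≠ 0 := by
    simp [ENNReal.ofReal_eq_zero, not_le, mul_pos (Real.rpow_pos_of_pos hκ0 _) hM0]
  have hKt : ENNReal.ofReal (κ ^ (3 * s / 2) * M) ≠ ⊤ := ENNReal.ofReal_ne_top
  constructor
  · calc (ENNReal.ofReal (κ ^ (3 * s / 2) * M))⁻¹ *
          ∫⁻ x in A, (μ {y | d x y < r}) ^ (-(1 : ℝ) / 2) ∂μ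
        ≤ (ENNReal.ofReal (κ ^ (3 * s / 2) * M))⁻¹ *
          ((ENNReal.ofReal (κ ^ s) * C ^ ((1:ℝ)/2)) *
            ∫⁻ x in A, (μ' {y | d' x y < r}) ^ (-(1 : ℝ) / 2) ∂μ') := mul_le_mul_right key₁ _
    _ ≤ (ENNReal.ofReal (κ ^ (3 * s / 2) * M))⁻¹ *
          (ENNReal.ofReal (κ ^ (3 * s / 2) * M) *
            ∫⁻ x in A, (μ' {y | d' x y < r}) ^ (-(1 : ℝ) / 2) ∂μ') :=
          mul_le_mul_right (mul_le_mul_left hconst _) _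
    _ = ∫⁻ x in A, (μ' {y | d' x y < r}) ^ (-(1 : ℝ) / 2) ∂μ' := by
          rw [← mul_assoc, ENNReal.inv_mul_cancel hK0 hKt, one_mul]
  · exact le_trans key₂ (mul_le_mul_left hconst _)
end

section
/- Let X be a measurable space, μ and μ' two measures on X, d, d' : X × X → ℝ, and constants s > 0, κ ≥ 1, M ≥ 1, Θ > 0, r > 0 and t ∈ (0,1]. With B_r(x), B'_r(x), μ_r, μ'_r defined as before (all balls measurable, ball-volume functions measurable, with 0 < μ(B_ρ(x)) < ∞ and 0 < μ'(B'_ρ(x)) < ∞ for the radii ρ ∈ {r, rt} involved), assume: (i) κ^{−s}·μ(A) ≤ μ'(A) ≤ κ^{s}·μ(A) for every measurable A; (ii) κ^{−1}·d ≤ d' ≤ κ·d pointwise; (iii) μ(B_{κρ}(x)) ≤ M·μ(B_ρ(x)) for all x and ρ > 0. Fix x ∈ X, a measurable set A ⊆ B_r(x), and a measurable set A_t ⊆ X (the image Φ_t(x,A) of A under the contraction map), and assume the measure contraction inequality μ_r(A)/√(μ(B_r(x))) ≤ Θ·μ_{rt}(A_t)/√(μ(B_{rt}(x))) holds for (d,μ).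 Then the corresponding inequality holds for (d',μ') with constant Θκ^{4s}M³: μ'_r(A)/√(μ'(B'_r(x))) ≤ Θκ^{4s}M³·μ'_{rt}(A_t)/√(μ'(B'_{rt}(x))). -/
open MeasureTheory

open scoped ENNReal NNReal

private lemma aux_half {C : ℝ} (hC : 0 < C) {u v : ℝ≥0∞} (h : u ≤ ENNReal.ofReal C * v) :
    u ^ ((1:ℝ)/2) ≤ ENNReal.ofReal (C ^ ((1:ℝ)/2)) * v ^ ((1:ℝ)/2) := by
  calc u ^ ((1:ℝ)/2) ≤ (ENNReal.ofReal C * v) ^ ((1:ℝ)/2) :=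
        ENNReal.rpow_le_rpow h (by norm_num)
    _ = ENNReal.ofReal (C ^ ((1:ℝ)/2)) * v ^ ((1:ℝ)/2) := by
        rw [ENNReal.mul_rpow_of_nonneg _ _ (by norm_num : (0:ℝ) ≤ 1/2),
          ENNReal.ofReal_rpow_of_pos hC]

private lemma aux_neg_half {C : ℝ} (hC : 0 < C) {u v : ℝ≥0∞} (h : u ≤ ENNReal.ofReal C * v) :
    v ^ (-(1:ℝ)/2) ≤ ENNReal.ofReal (C ^ ((1:ℝ)/2)) * u ^ (-(1:ℝ)/2) := by
  have hhalf := aux_half hC h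
  set c := ENNReal.ofReal (C ^ ((1:ℝ)/2)) with hc
  have hc0 : c ≠ 0 := by
    rw [hc]
    simp only [ne_eq, ENNReal.ofReal_eq_zero, not_le]
    positivity
  have hct : c ≠ ∞ := ENNReal.ofReal_ne_top
  have hrw : (-(1:ℝ)/2) = -((1:ℝ)/2) := by norm_num
  rw [hrw, ENNReal.rpow_neg, ENNReal.rpow_neg]
  have key : c⁻¹ * u ^ ((1:ℝ)/2) ≤ v ^ ((1:ℝ)/2) := by
    calc c⁻¹ * u ^ ((1:ℝ)/2) ≤ c⁻¹ * (c * v ^ ((1:ℝ)/2)) := mul_le_mul_right hhalf _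
      _ = (c⁻¹ * c) * v ^ ((1:ℝ)/2) := (mul_assoc _ _ _).symm
      _ = v ^ ((1:ℝ)/2) := by rw [ENNReal.inv_mul_cancel hc0 hct, one_mul]
  calc (v ^ ((1:ℝ)/2))⁻¹ ≤ (c⁻¹ * u ^ ((1:ℝ)/2))⁻¹ := ENNReal.inv_le_inv.mpr key
    _ = c⁻¹⁻¹ * (u ^ ((1:ℝ)/2))⁻¹ :=
        ENNReal.mul_inv (Or.inl (ENNReal.inv_ne_zero.mpr hct)) (Or.inl (ENNReal.inv_ne_top.mpr hc0))
    _ = c * (u ^ ((1:ℝ)/2))⁻¹ := by rw [inv_inv]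

private lemma aux_div_le_div {n1 d1 n2 d2 : ℝ≥0∞} (h10 : d1 ≠ 0) (h1t : d1 ≠ ⊤)
    (h20 : d2 ≠ 0) (h2t : d2 ≠ ⊤) :
    n1 / d1 ≤ n2 / d2 ↔ n1 * d2 ≤ n2 * d1 := by
  rw [ENNReal.div_le_iff h10 h1t, ← ENNReal.mul_le_mul_iff_left h20 h2t, mul_right_comm,
    ENNReal.div_mul_cancel h20 h2t]

/-- Transfer of the measure contraction inequality under (local) equivalence of
distances and measures: if `κ^{−s}μ ≤ μ' ≤ κ^{s}μ`, `κ⁻¹d ≤ d' ≤ κd`, `μ` is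
doubling with constant `M` on `κ`-dilations, and the measure contraction inequality
`μ_r(A)/√(μ(B_r(x))) ≤ Θ·μ_{rt}(A_t)/√(μ(B_{rt}(x)))` holds for `(d,μ)`, then the
corresponding inequality holds for `(d',μ')` with constant `Θκ^{4s}M³`. -/
theorem statement16 {X : Type*} [MeasurableSpace X] (μ μ' : Measure X)
    (d d' : X → X → ℝ) (s κ M Θ r t : ℝ)
    (hs : 0 < s) (hκ : 1 ≤ κ) (hM : 1 ≤ M) (hΘ : 0 < Θ) (hr : 0 < r)
    (ht : t ∈ Set.Ioc (0 : ℝ) 1)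
    (hB : ∀ (x : X) (ρ : ℝ), MeasurableSet {y | d x y < ρ})
    (hB' : ∀ (x : X) (ρ : ℝ), MeasurableSet {y | d' x y < ρ})
    (hmeas : ∀ ρ : ℝ, Measurable fun x => μ {y | d x y < ρ})
    (hmeas' : ∀ ρ : ℝ, Measurable fun x => μ' {y | d' x y < ρ})
    (hμ₁ : ∀ A : Set X, MeasurableSet A → ENNReal.ofReal (κ ^ (-s)) * μ A ≤ μ' A)
    (hμ₂ : ∀ A : Set X, MeasurableSet A → μ' A ≤ ENNReal.ofReal (κ ^ s) * μ A)
    (hd₁ : ∀ x y : X, κ⁻¹ * d x y ≤ d' x y)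
    (hd₂ : ∀ x y : X, d' x y ≤ κ * d x y)
    (hdbl : ∀ x : X, ∀ ρ > (0 : ℝ),
      μ {y | d x y < κ * ρ} ≤ ENNReal.ofReal M * μ {y | d x y < ρ})
    (x : X) (A At : Set X) (hA : MeasurableSet A) (hAt : MeasurableSet At)
    (hAB : A ⊆ {y | d x y < r})
    (hpos : ∀ ρ ∈ ({r, r * t} : Set ℝ),
      (0 < μ {y | d x y < ρ} ∧ μ {y | d x y < ρ} < ⊤) ∧
      (0 < μ' {y | d' x y < ρ} ∧ μ' {y | d' x y < ρ} < ⊤))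
    (hMCP :
      (∫⁻ y in A, (μ {z | d y z < r}) ^ (-(1 : ℝ) / 2) ∂μ) /
          (μ {y | d x y < r}) ^ ((1 : ℝ) / 2) ≤
        ENNReal.ofReal Θ *
          ((∫⁻ y in At, (μ {z | d y z < r * t}) ^ (-(1 : ℝ) / 2) ∂μ) /
            (μ {y | d x y < r * t}) ^ ((1 : ℝ) / 2))) :
    (∫⁻ y in A, (μ' {z | d' y z < r}) ^ (-(1 : ℝ) / 2) ∂μ') /
        (μ' {y | d' x y < r}) ^ ((1 : ℝ) / 2) ≤
      ENNReal.ofReal (Θ * κ ^ (4 * s) * M ^ 3) *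
        ((∫⁻ y in At, (μ' {z | d' y z < r * t}) ^ (-(1 : ℝ) / 2) ∂μ') /
          (μ' {y | d' x y < r * t}) ^ ((1 : ℝ) / 2)) := by
  obtain ⟨ht0, ht1⟩ := ht
  have hκ0 : (0:ℝ) < κ := lt_of_lt_of_le one_pos hκ
  have hrt : (0:ℝ) < r * t := mul_pos hr ht0
  set a := κ ^ s with ha_def
  have ha1 : (1:ℝ) ≤ a := Real.one_le_rpow hκ hs.le
  have ha0 : (0:ℝ) < a := lt_of_lt_of_le one_pos ha1
  set C := a * M with hC_def
  have hC1 : (1:ℝ) ≤ C := by nlinarith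
  have hC0 : (0:ℝ) < C := lt_of_lt_of_le one_pos hC1
  set c := C ^ ((1:ℝ)/2) with hc_def
  set oa := ENNReal.ofReal a with hoa
  set oc := ENNReal.ofReal c with hoc
  -- measure comparisons
  have F1 : ∀ U : Set X, MeasurableSet U → μ' U ≤ oa * μ U := hμ₂
  have F2 : ∀ U : Set X, MeasurableSet U → μ U ≤ oa * μ' U := by
    intro U hU
    calc μ U = oa * (ENNReal.ofReal (κ ^ (-s)) * μ U) := by
          rw [← mul_assoc, hoa, ← ENNReal.ofReal_mul ha0.le, ha_def,
            ← Real.rpow_add hκ0, add_neg_cancel, Real.rpow_zero, ENNReal.ofReal_one, one_mul]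
      _ ≤ oa * μ' U := mul_le_mul_right (hμ₁ U hU) _
  -- ball inclusions
  have hsub1 : ∀ (y : X) (ρ : ℝ), {z | d' y z < ρ} ⊆ {z | d y z < κ * ρ} := by
    intro y ρ z hz
    simp only [Set.mem_setOf_eq] at hz ⊢
    have h2 : d y z ≤ κ * d' y z := by
      have := mul_le_mul_of_nonneg_left (hd₁ y z) hκ0.le
      rwa [← mul_assoc, mul_inv_cancel₀ hκ0.ne', one_mul] at this
    exact h2.trans_lt (mul_lt_mul_of_pos_left hz hκ0)
  have hsub2 : ∀ (y : X) (ρ : ℝ), {z | d y z < κ⁻¹ * ρ} ⊆ {z | d' y z < ρ} := by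
    intro y ρ z hz
    simp only [Set.mem_setOf_eq] at hz ⊢
    calc d' y z ≤ κ * d y z := hd₂ y z
      _ < κ * (κ⁻¹ * ρ) := mul_lt_mul_of_pos_left hz hκ0
      _ = ρ := by rw [← mul_assoc, mul_inv_cancel₀ hκ0.ne', one_mul]
  -- ball volume comparisons
  have F3 : ∀ (y : X) (ρ : ℝ), 0 < ρ →
      μ' {z | d' y z < ρ} ≤ ENNReal.ofReal C * μ {z | d y z < ρ} := by
    intro y ρ hρ
    calc μ' {z | d' y z < ρ} ≤ oa * μ {z | d' y z < ρ} := F1 _ (hB' y ρ)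
      _ ≤ oa * μ {z | d y z < κ * ρ} := mul_le_mul_right (measure_mono (hsub1 y ρ)) _
      _ ≤ oa * (ENNReal.ofReal M * μ {z | d y z < ρ}) := mul_le_mul_right (hdbl y ρ hρ) _
      _ = ENNReal.ofReal C * μ {z | d y z < ρ} := by
          rw [← mul_assoc, hoa, ← ENNReal.ofReal_mul ha0.le, hC_def]
  have F4 : ∀ (y : X) (ρ : ℝ), 0 < ρ →
      μ {z | d y z < ρ} ≤ ENNReal.ofReal C * μ' {z | d' y z < ρ} := by
    intro y ρ hρ
    have hρκ : 0 < κ⁻¹ * ρ := mul_pos (inv_pos.mpr hκ0) hρ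
    have he : κ * (κ⁻¹ * ρ) = ρ := by rw [← mul_assoc, mul_inv_cancel₀ hκ0.ne', one_mul]
    calc μ {z | d y z < ρ} = μ {z | d y z < κ * (κ⁻¹ * ρ)} := by rw [he]
      _ ≤ ENNReal.ofReal M * μ {z | d y z < κ⁻¹ * ρ} := hdbl y _ hρκ
      _ ≤ ENNReal.ofReal M * (oa * μ' {z | d y z < κ⁻¹ * ρ}) :=
          mul_le_mul_right (F2 _ (hB y _)) _
      _ ≤ ENNReal.ofReal M * (oa * μ' {z | d' y z < ρ}) :=
          mul_le_mul_right (mul_le_mul_right (measure_mono (hsub2 y ρ)) _) _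
      _ = ENNReal.ofReal C * μ' {z | d' y z < ρ} := by
          rw [← mul_assoc, hoa, ← ENNReal.ofReal_mul (le_trans zero_le_one hM),
            mul_comm M a, ← hC_def]
  -- generic integral comparison
  have hint : ∀ (ν ν' : Measure X) (U : Set X), MeasurableSet U → ∀ f : X → ℝ≥0∞,
      (∀ V : Set X, MeasurableSet V → ν V ≤ oa * ν' V) →
      ∫⁻ y in U, f y ∂ν ≤ oa * ∫⁻ y in U, f y ∂ν' := by
    intro ν ν' U hU f hle
    rw [← smul_eq_mul, ← lintegral_smul_measure, ← Measure.restrict_smul]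
    refine lintegral_mono' ?_ le_rfl
    refine Measure.le_iff.mpr fun V hV => ?_
    rw [Measure.restrict_apply hV, Measure.restrict_apply hV, Measure.smul_apply, smul_eq_mul]
    exact hle _ (hV.inter hU)
  -- abbreviations
  set N := ∫⁻ y in A, (μ {z | d y z < r}) ^ (-(1 : ℝ) / 2) ∂μ with hN
  set Nt := ∫⁻ y in At, (μ {z | d y z < r * t}) ^ (-(1 : ℝ) / 2) ∂μ with hNt
  set N' := ∫⁻ y in A, (μ' {z | d' y z < r}) ^ (-(1 : ℝ) / 2) ∂μ' with hN'
  set Nt' := ∫⁻ y in At, (μ' {z | d' y z < r * t}) ^ (-(1 : ℝ) / 2) ∂μ' with hNt'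
  set D := (μ {y | d x y < r}) ^ ((1 : ℝ) / 2) with hD
  set Dt := (μ {y | d x y < r * t}) ^ ((1 : ℝ) / 2) with hDt
  set D' := (μ' {y | d' x y < r}) ^ ((1 : ℝ) / 2) with hD'
  set Dt' := (μ' {y | d' x y < r * t}) ^ ((1 : ℝ) / 2) with hDt'
  -- positivity facts
  have hposr := hpos r (by simp)
  have hposrt := hpos (r * t) (by simp)
  have hpow_ne : ∀ m : ℝ≥0∞, 0 < m → m < ⊤ → m ^ ((1:ℝ)/2) ≠ 0 ∧ m ^ ((1:ℝ)/2) ≠ ⊤ := by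
    intro m h0 htop
    constructor
    · simp only [ne_eq, ENNReal.rpow_eq_zero_iff, not_or, not_and]
      exact ⟨fun h => absurd h h0.ne', fun h => absurd h htop.ne⟩
    · simp only [ne_eq, ENNReal.rpow_eq_top_iff, not_or, not_and]
      exact ⟨fun h => absurd h h0.ne', fun h => absurd h htop.ne⟩
  obtain ⟨hD0, hDtop⟩ := hpow_ne _ hposr.1.1 hposr.1.2
  obtain ⟨hD'0, hD'top⟩ := hpow_ne _ hposr.2.1 hposr.2.2
  obtain ⟨hDt0, hDttop⟩ := hpow_ne _ hposrt.1.1 hposrt.1.2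
  obtain ⟨hDt'0, hDt'top⟩ := hpow_ne _ hposrt.2.1 hposrt.2.2
  -- key one-sided bounds
  have hbN' : N' ≤ oc * (oa * N) := by
    calc N' ≤ ∫⁻ y in A, oc * (μ {z | d y z < r}) ^ (-(1 : ℝ) / 2) ∂μ' :=
          lintegral_mono fun y => aux_neg_half hC0 (F4 y r hr)
      _ = oc * ∫⁻ y in A, (μ {z | d y z < r}) ^ (-(1 : ℝ) / 2) ∂μ' :=
          lintegral_const_mul' _ _ ENNReal.ofReal_ne_top
      _ ≤ oc * (oa * N) := mul_le_mul_right (hint μ' μ A hA _ F1) _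
  have hbNt : Nt ≤ oc * (oa * Nt') := by
    calc Nt ≤ ∫⁻ y in At, oc * (μ' {z | d' y z < r * t}) ^ (-(1 : ℝ) / 2) ∂μ :=
          lintegral_mono fun y => aux_neg_half hC0 (F3 y (r * t) hrt)
      _ = oc * ∫⁻ y in At, (μ' {z | d' y z < r * t}) ^ (-(1 : ℝ) / 2) ∂μ :=
          lintegral_const_mul' _ _ ENNReal.ofReal_ne_top
      _ ≤ oc * (oa * Nt') := mul_le_mul_right (hint μ μ' At hAt _ F2) _
  have hbD : D ≤ oc * D' := aux_half hC0 (F4 x r hr)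
  have hbDt' : Dt' ≤ oc * Dt := aux_half hC0 (F3 x (r * t) hrt)
  -- cross-multiplied MCP for (d, μ)
  have hcross : N * Dt ≤ ENNReal.ofReal Θ * Nt * D := by
    have := hMCP
    rw [← mul_div_assoc] at this
    exact (aux_div_le_div hD0 hDtop hDt0 hDttop).mp this
  -- chain
  have hchain : N' * Dt' ≤ (oc ^ 4 * oa ^ 2 * ENNReal.ofReal Θ) * (Nt' * D') := by
    calc N' * Dt' ≤ (oc * (oa * N)) * (oc * Dt) := mul_le_mul' hbN' hbDt'
      _ = (oc ^ 2 * oa) * (N * Dt) := by ring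
      _ ≤ (oc ^ 2 * oa) * (ENNReal.ofReal Θ * Nt * D) := mul_le_mul_right hcross _
      _ ≤ (oc ^ 2 * oa) * (ENNReal.ofReal Θ * (oc * (oa * Nt')) * (oc * D')) := by
          exact mul_le_mul_right (mul_le_mul' (mul_le_mul_right hbNt _) hbD) _
      _ = (oc ^ 4 * oa ^ 2 * ENNReal.ofReal Θ) * (Nt' * D') := by ring
  -- constant comparison
  have hconst : oc ^ 4 * oa ^ 2 * ENNReal.ofReal Θ ≤ ENNReal.ofReal (Θ * κ ^ (4 * s) * M ^ 3) := by
    have hcnn : (0:ℝ) ≤ c := Real.rpow_nonneg hC0.le _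
    have h1 : oc ^ 4 * oa ^ 2 * ENNReal.ofReal Θ = ENNReal.ofReal (c ^ 4 * a ^ 2 * Θ) := by
      rw [ENNReal.ofReal_mul (by positivity), ENNReal.ofReal_mul (by positivity),
        ENNReal.ofReal_pow hcnn, ENNReal.ofReal_pow ha0.le]
    rw [h1]
    apply ENNReal.ofReal_le_ofReal
    have hc2 : c ^ 2 = C := by
      rw [hc_def, ← Real.rpow_natCast (C ^ ((1:ℝ)/2)) 2, ← Real.rpow_mul hC0.le]
      norm_num
    have hc4 : c ^ 4 = C ^ 2 := by
      have : c ^ 4 = (c ^ 2) ^ 2 := by ring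
      rw [this, hc2]
    have ha4 : a ^ 4 = κ ^ (4 * s) := by
      rw [ha_def, ← Real.rpow_natCast (κ ^ s) 4, ← Real.rpow_mul hκ0.le]
      norm_num [mul_comm]
    have hM23 : M ^ 2 ≤ M ^ 3 := pow_le_pow_right₀ hM (by norm_num)
    calc c ^ 4 * a ^ 2 * Θ = Θ * (a ^ 4 * M ^ 2) := by rw [hc4, hC_def]; ring
      _ ≤ Θ * (a ^ 4 * M ^ 3) := by
          apply mul_le_mul_of_nonneg_left _ hΘ.le
          exact mul_le_mul_of_nonneg_left hM23 (by positivity)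
      _ = Θ * κ ^ (4 * s) * M ^ 3 := by rw [ha4]; ring
  -- finish
  rw [← mul_div_assoc, aux_div_le_div hD'0 hD'top hDt'0 hDt'top]
  calc N' * Dt' ≤ (oc ^ 4 * oa ^ 2 * ENNReal.ofReal Θ) * (Nt' * D') := hchain
    _ ≤ ENNReal.ofReal (Θ * κ ^ (4 * s) * M ^ 3) * (Nt' * D') := mul_le_mul_left hconst _
    _ = ENNReal.ofReal (Θ * κ ^ (4 * s) * M ^ 3) * Nt' * D' := by ring
end
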